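/- arXiv:1512.07301 — 4 statements merged into one kernel-verified Lean document; each statement's English description precedes it below -/
import Mathlib

section
/- Let f, g ∈ K[Z] be polynomials over a field K of characteristic not 2 or 3, and set Δ(Z) = −16(4f(Z)³ + 27g(Z)²). If Δ(Z) is a nonzero constant and j(Z) = −1728(4f(Z))³/Δ(Z) is not a constant, then a contradiction arises; equivalently, if Δ(Z) ≠ 0 and j(Z) ∉ K, then Δ(Z) is a non-constant polynomial. -/
open Polynomial UniqueFactorizationMonoid UniqueFactorizationDomain

section Aux

variable {K : Type*} [Field K]

lemma aux_key (h2 : (2 : K) ≠ 0) (h3 : (3 : K) ≠ 0) :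
    ∀ n : ℕ, ∀ f g : Polynomial K, f.natDegree ≤ n → ∀ c : K, c ≠ 0 →
      4 * f ^ 3 + 27 * g ^ 2 = Polynomial.C c → f.natDegree = 0 := by
  classical
  intro n
  induction n with
  | zero => intro f g hdeg c hc heq; omega
  | succ n ih =>
    intro f g hdeg c hc heq
    by_contra hf0
    have h4 : (4 : K) ≠ 0 := by
      have := mul_ne_zero h2 h2; norm_num at this; exact this
    have h27 : (27 : K) ≠ 0 := by
      have := mul_ne_zero (mul_ne_zero h3 h3) h3; norm_num at this; exact this
    have h12 : (12 : K) ≠ 0 := by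
      have := mul_ne_zero (mul_ne_zero h2 h2) h3; norm_num at this; exact this
    have h54 : (54 : K) ≠ 0 := by
      have := mul_ne_zero (mul_ne_zero (mul_ne_zero h3 h3) h3) h2; norm_num at this; exact this
    have hf : f ≠ 0 := by intro h; simp [h] at hf0
    have hg : g ≠ 0 := by
      intro h
      subst h
      have : (4 : Polynomial K) * f ^ 3 = Polynomial.C c := by
        simpa using heq
      have h4' : (4 : Polynomial K) = Polynomial.C (4 : K) := (map_ofNat Polynomial.C 4).symm
      have hdeg' : (Polynomial.C (4:K) * f ^ 3).natDegree = 0 := by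
        rw [← h4', this]; simp
      rw [Polynomial.natDegree_C_mul h4, Polynomial.natDegree_pow] at hdeg'
      omega
    set a := 4 * f ^ 3 with ha_def
    set b := 27 * g ^ 2 with hb_def
    have h4' : (4 : Polynomial K) = Polynomial.C (4 : K) := (map_ofNat Polynomial.C 4).symm
    have h27' : (27 : Polynomial K) = Polynomial.C (27 : K) := (map_ofNat Polynomial.C 27).symm
    have ha : a ≠ 0 := by
      rw [ha_def, h4']
      exact mul_ne_zero (Polynomial.C_ne_zero.mpr h4) (pow_ne_zero _ hf)
    have hb : b ≠ 0 := by
      rw [hb_def, h27']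
      exact mul_ne_zero (Polynomial.C_ne_zero.mpr h27) (pow_ne_zero _ hg)
    have hcC : (Polynomial.C c : Polynomial K) ≠ 0 := Polynomial.C_ne_zero.mpr hc
    have hc0 : (-(Polynomial.C c) : Polynomial K) ≠ 0 := neg_ne_zero.mpr hcC
    have hab : IsCoprime a b := by
      refine ⟨Polynomial.C c⁻¹, Polynomial.C c⁻¹, ?_⟩
      rw [← mul_add, heq, ← Polynomial.C_mul, inv_mul_cancel₀ hc, Polynomial.C_1]
    have hbc : IsCoprime b (-(Polynomial.C c)) := by
      refine ⟨0, -(Polynomial.C c⁻¹), ?_⟩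
      rw [zero_mul, zero_add, neg_mul_neg, ← Polynomial.C_mul, inv_mul_cancel₀ hc,
        Polynomial.C_1]
    have hca : IsCoprime (-(Polynomial.C c)) a := by
      refine ⟨-(Polynomial.C c⁻¹), 0, ?_⟩
      rw [zero_mul, add_zero, neg_mul_neg, ← Polynomial.C_mul, inv_mul_cancel₀ hc,
        Polynomial.C_1]
    have hsum : a + b + -(Polynomial.C c) = 0 := by rw [heq]; ring
    have hdega : a.natDegree = 3 * f.natDegree := by
      rw [ha_def, h4', Polynomial.natDegree_C_mul h4, Polynomial.natDegree_pow]
    have hdegb : b.natDegree = 2 * g.natDegree := by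
      rw [hb_def, h27', Polynomial.natDegree_C_mul h27, Polynomial.natDegree_pow]
    rcases Polynomial.abc ha hb hc0 hab hsum with ⟨hA, hB, _⟩ | ⟨hA, hB, _⟩
    · -- degree case: contradiction
      have hfg : IsCoprime (f ^ 3) (g ^ 2) := by
        refine ⟨Polynomial.C (4 * c⁻¹), Polynomial.C (27 * c⁻¹), ?_⟩
        have : Polynomial.C (4 * c⁻¹) * f ^ 3 + Polynomial.C (27 * c⁻¹) * g ^ 2
            = Polynomial.C c⁻¹ * (4 * f ^ 3 + 27 * g ^ 2) := by
          rw [h4', h27']; simp only [Polynomial.C_mul]; ring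
        rw [this, heq, ← Polynomial.C_mul, inv_mul_cancel₀ hc, Polynomial.C_1]
      have hrad_dvd : radical (a * b * -(Polynomial.C c)) ∣ f * g := by
        have hu : IsUnit (Polynomial.C (4 * 27 * -c) : Polynomial K) :=
          Polynomial.isUnit_C.mpr (isUnit_iff_ne_zero.mpr
            (mul_ne_zero (mul_ne_zero h4 h27) (neg_ne_zero.mpr hc)))
        have hassoc : Associated (f ^ 3 * g ^ 2) (a * b * -(Polynomial.C c)) := by
          refine ⟨hu.unit, ?_⟩
          rw [IsUnit.unit_spec, ha_def, hb_def, h4', h27']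
          simp only [Polynomial.C_mul, Polynomial.C_neg]
          ring
        rw [← radical_eq_of_associated hassoc,
          radical_mul hfg.isRelPrime, radical_pow f (by norm_num : 3 ≠ 0),
          radical_pow g (by norm_num : 2 ≠ 0)]
        exact mul_dvd_mul (radical_dvd_self (a := f)) (radical_dvd_self (a := g))
      have hrad_le : (radical (a * b * -(Polynomial.C c))).natDegree
          ≤ f.natDegree + g.natDegree := by
        have := Polynomial.natDegree_le_of_dvd hrad_dvd (mul_ne_zero hf hg)
        rwa [Polynomial.natDegree_mul hf hg] at this
      rw [hdega] at hA
      rw [hdegb] at hB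
      omega
    · -- derivative case
      have h12' : (12 : Polynomial K) ≠ 0 := by
        rw [show (12 : Polynomial K) = Polynomial.C (12 : K) from (map_ofNat Polynomial.C 12).symm,
          Polynomial.C_ne_zero]
        exact h12
      have h54' : (54 : Polynomial K) ≠ 0 := by
        rw [show (54 : Polynomial K) = Polynomial.C (54 : K) from (map_ofNat Polynomial.C 54).symm,
          Polynomial.C_ne_zero]
        exact h54
      have hf' : Polynomial.derivative f = 0 := by
        have key : (12 : Polynomial K) * (f ^ 2 * Polynomial.derivative f) = 0 := by
          rw [← hA, ha_def]
          simp only [derivative_mul, Polynomial.derivative_ofNat, zero_mul, zero_add,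
            Polynomial.derivative_pow]
          push_cast
          rw [map_ofNat Polynomial.C 3]
          ring
        rcases mul_eq_zero.mp key with h | h
        · exact absurd h h12'
        · rcases mul_eq_zero.mp h with h | h
          · exact absurd ((pow_eq_zero_iff (by norm_num : (2:ℕ) ≠ 0)).mp h) hf
          · exact h
      have hg' : Polynomial.derivative g = 0 := by
        have key : (54 : Polynomial K) * (g * Polynomial.derivative g) = 0 := by
          rw [← hB, hb_def]
          simp only [derivative_mul, Polynomial.derivative_ofNat, zero_mul, zero_add,
            Polynomial.derivative_pow]
          push_cast
          rw [map_ofNat Polynomial.C 2]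
          ring
        rcases mul_eq_zero.mp key with h | h
        · exact absurd h h54'
        · rcases mul_eq_zero.mp h with h | h
          · exact absurd h hg
          · exact h
      obtain ⟨p, hp⟩ := CharP.exists K
      rcases CharP.char_is_prime_or_zero K p with hprime | hzero
      · -- char p prime: use expand/contract and induction
        have hp0 : p ≠ 0 := hprime.ne_zero
        have hp1 : 1 < p := hprime.one_lt
        set f₁ := Polynomial.contract p f with hf₁
        set g₁ := Polynomial.contract p g with hg₁
        have hef : Polynomial.expand K p f₁ = f := Polynomial.expand_contract p hf' hp0
        have heg : Polynomial.expand K p g₁ = g := Polynomial.expand_contract p hg' hp0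
        have heq₁ : 4 * f₁ ^ 3 + 27 * g₁ ^ 2 = Polynomial.C c := by
          apply Polynomial.expand_injective (Nat.pos_of_ne_zero hp0)
          rw [map_add, map_mul, map_mul, map_pow, map_pow, hef, heg]
          rw [show (Polynomial.expand K p) 4 = 4 by rw [h4']; simp,
            show (Polynomial.expand K p) 27 = 27 by rw [h27']; simp]
          rw [heq]; simp
        have hdf : f.natDegree = f₁.natDegree * p := by
          rw [← hef, Polynomial.natDegree_expand]
        have hf₁pos : f₁.natDegree ≠ 0 := by
          intro h; rw [h] at hdf; simp at hdf; exact hf0 hdf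
        have h2p : f₁.natDegree * 2 ≤ f₁.natDegree * p := Nat.mul_le_mul_left _ hp1
        have : f₁.natDegree ≤ n := by omega
        exact hf₁pos (ih f₁ g₁ this c hc heq₁)
      · -- char 0
        subst hzero
        haveI : CharZero K := CharP.charP_to_charZero K
        have := Polynomial.eq_C_of_derivative_eq_zero hf'
        rw [this] at hf0
        simp at hf0

end Aux

theorem discriminant_nonconstant {K : Type*} [Field K] (h2 : (2 : K) ≠ 0) (h3 : (3 : K) ≠ 0)
    (f g Δ : Polynomial K) (hΔdef : Δ = -16 * (4 * f ^ 3 + 27 * g ^ 2)) (hΔ : Δ ≠ 0)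
    (hj : ∀ c : K, (-1728 : Polynomial K) * (4 * f) ^ 3 ≠ Polynomial.C c * Δ) :
    ∀ c : K, Δ ≠ Polynomial.C c := by
  intro c hΔc
  have h16 : (16 : K) ≠ 0 := by
    have := mul_ne_zero (mul_ne_zero h2 h2) (mul_ne_zero h2 h2)
    norm_num at this; exact this
  have hn16 : (-16 : K) ≠ 0 := neg_ne_zero.mpr h16
  have hc : c ≠ 0 := by
    intro h; rw [h] at hΔc; simp at hΔc; exact hΔ hΔc
  have h16' : (-16 : Polynomial K) = Polynomial.C (-16 : K) := by
    rw [map_neg, map_ofNat]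
  have heq : 4 * f ^ 3 + 27 * g ^ 2 = Polynomial.C ((-16)⁻¹ * c) := by
    apply mul_left_cancel₀ (show (Polynomial.C (-16 : K)) ≠ 0 from Polynomial.C_ne_zero.mpr hn16)
    rw [← Polynomial.C_mul, ← mul_assoc, mul_inv_cancel₀ hn16, one_mul, ← h16', ← hΔdef, hΔc]
  have hc' : (-16 : K)⁻¹ * c ≠ 0 := mul_ne_zero (inv_ne_zero hn16) hc
  have hfdeg : f.natDegree = 0 := aux_key h2 h3 f.natDegree f g le_rfl _ hc' heq
  obtain ⟨a, hfa⟩ := Polynomial.natDegree_eq_zero.mp hfdeg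
  apply hj ((-1728) * (4 * a) ^ 3 * c⁻¹)
  rw [hΔc, ← hfa]
  rw [show ((-1728 : Polynomial K)) = Polynomial.C (-1728 : K) by rw [map_neg, map_ofNat],
    show ((4 : Polynomial K)) = Polynomial.C (4 : K) from (map_ofNat Polynomial.C 4).symm]
  simp only [← Polynomial.C_mul, ← Polynomial.C_pow]
  congr 1
  field_simp
end

section
/- Let p be prime, T < p, and W a convex subset of a T×T integer box with N(W) lattice points. Suppose for each nonzero a ∈ F_p the exponential sum Σ_{(u,v)∈W∩ℤ², p∤v} e_p(au/v) is bounded by T^{1/2}p^{1/2+o(1)}, and suppose for each m ≥ 0 and n ≥ 1 the twisted sum Σ_{w∈F_p, Δ(w)≠0} sym_n(ψ_p(E(w)))e_p(mw) is bounded by Cnp^{1/2}. Then Σ_{(u,v)∈W∩ℤ², Δ(u/v)≢0 mod p} sym_n(ψ_p(E(u/v))) ≪ nT^{1/2}p^{1+o(1)}. -/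
/-- `sym n θ = sin((n+1)θ)/sin θ`, extended by continuity at `θ = 0, π`. -/
noncomputable def symAngle (n : ℕ) (θ : ℝ) : ℝ :=
  if θ = 0 then n + 1
  else if θ = Real.pi then (-1) ^ n * (n + 1)
  else Real.sin ((n + 1) * θ) / Real.sin θ

open Finset Classical in
theorem sym_sum_over_convex_set :
    ∀ ε > (0:ℝ), ∀ Cexp > (0:ℝ), ∃ C > (0:ℝ),
      ∀ (p T : ℕ) [Fact p.Prime] (A B : ℤ) (W : Set (ℝ × ℝ)),
        Convex ℝ W →
        W ⊆ Set.Icc ((A:ℝ) + 1) ((A:ℝ) + T) ×ˢ Set.Icc ((B:ℝ) + 1) ((B:ℝ) + T) →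
        T < p → 1 ≤ T →
        ∀ (Δ : Polynomial (ZMod p)) (ψ : ZMod p → ℝ),
          (∀ w, ψ w ∈ Set.Icc 0 Real.pi) →
          ∀ n : ℕ, 1 ≤ n →
          -- exponential sum hypothesis over lattice points of `W`
          (∀ a : ZMod p, a ≠ 0 →
            ‖∑ x ∈ (Finset.Icc (A + 1) (A + (T:ℤ)) ×ˢ Finset.Icc (B + 1) (B + (T:ℤ))).filter
                (fun x : ℤ × ℤ => ((x.1 : ℝ), (x.2 : ℝ)) ∈ W ∧ ¬ (p:ℤ) ∣ x.2),
              Complex.exp (2 * Real.pi * Complex.I *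
                (((a * (x.1 : ZMod p) * (x.2 : ZMod p)⁻¹).val : ℝ) / p))‖
              ≤ (T : ℝ) ^ ((1:ℝ)/2) * (p : ℝ) ^ ((1:ℝ)/2 + ε)) →
          -- twisted sum hypothesis over `F_p`
          (∀ m : ZMod p,
            ‖∑ w ∈ Finset.univ.filter (fun w : ZMod p => Polynomial.eval w Δ ≠ 0),
              (symAngle n (ψ w) : ℂ) *
                Complex.exp (2 * Real.pi * Complex.I * (((m * w).val : ℝ) / p))‖
              ≤ Cexp * n * (p : ℝ) ^ ((1:ℝ)/2)) →
          |∑ x ∈ (Finset.Icc (A + 1) (A + (T:ℤ)) ×ˢ Finset.Icc (B + 1) (B + (T:ℤ))).filter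
              (fun x : ℤ × ℤ => ((x.1 : ℝ), (x.2 : ℝ)) ∈ W ∧ ¬ (p:ℤ) ∣ x.2 ∧
                Polynomial.eval ((x.1 : ZMod p) * (x.2 : ZMod p)⁻¹) Δ ≠ 0),
            symAngle n (ψ ((x.1 : ZMod p) * (x.2 : ZMod p)⁻¹))|
            ≤ C * n * (T : ℝ) ^ ((1:ℝ)/2) * (p : ℝ) ^ (1 + ε) := by
  intro ε hε Cexp hCexp
  refine ⟨2 * Cexp, by positivity, ?_⟩
  intro p T _ A B W _hconv _hsub hTp hT Δ ψ _hψ n hn hexp htw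
  haveI : NeZero p := ⟨(Fact.out : p.Prime).ne_zero⟩
  have hp0 : (0:ℝ) < p := by
    exact_mod_cast Nat.pos_of_ne_zero (NeZero.ne p)
  have hp1 : (1:ℝ) ≤ (p:ℝ) := by exact_mod_cast Nat.one_le_iff_ne_zero.mpr (NeZero.ne p)
  have hT0 : (0:ℝ) < T := by exact_mod_cast Nat.lt_of_lt_of_le Nat.zero_lt_one hT
  have hTle : (T:ℝ) ≤ (p:ℝ) := by exact_mod_cast Nat.le_of_lt hTp
  have hpC : (p:ℂ) ≠ 0 := by exact_mod_cast (Nat.cast_ne_zero (R := ℂ)).mpr (NeZero.ne p)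
  -- the standard additive character
  set χ : AddChar (ZMod p) ℂ := ZMod.stdAddChar with hχ
  have hchi : ∀ z : ZMod p, Complex.exp (2 * Real.pi * Complex.I * ((z.val : ℝ)/p)) = χ z := by
    intro z
    rw [hχ, ZMod.stdAddChar_apply, ZMod.toCircle_apply]
    push_cast
    ring_nf
  have horth : ∀ t : ZMod p, ∑ m : ZMod p, χ (t * m) = if t = 0 then (p:ℂ) else 0 := by
    intro t
    split_ifs with h
    · simp [h, hχ]
    · exact AddChar.sum_eq_zero_of_ne_one (ZMod.isPrimitive_stdAddChar p h)
  have hnormχ : ∀ z : ZMod p, ‖χ z‖ = 1 := by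
    intro z
    rw [hχ, ZMod.stdAddChar_apply, Circle.norm_coe]
  -- sets
  set Box := Finset.Icc (A + 1) (A + (T:ℤ)) ×ˢ Finset.Icc (B + 1) (B + (T:ℤ)) with hBox
  set F₀ := Box.filter (fun x : ℤ × ℤ => ((x.1 : ℝ), (x.2 : ℝ)) ∈ W ∧ ¬ (p:ℤ) ∣ x.2) with hF0
  set D := Finset.univ.filter (fun w : ZMod p => Polynomial.eval w Δ ≠ 0) with hD
  set F : ZMod p → ℂ :=
    fun z => if Polynomial.eval z Δ ≠ 0 then ((symAngle n (ψ z) : ℝ) : ℂ) else 0 with hF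
  set Tm : ZMod p → ℂ := fun m => ∑ w ∈ D, (symAngle n (ψ w) : ℂ) * χ (m * w) with hTm
  set U : ZMod p → ℂ :=
    fun m => ∑ x ∈ F₀, χ (m * (x.1 : ZMod p) * (x.2 : ZMod p)⁻¹) with hU
  -- restated hypotheses
  have hexp' : ∀ a : ZMod p, a ≠ 0 →
      ‖U a‖ ≤ (T:ℝ) ^ ((1:ℝ)/2) * (p:ℝ) ^ ((1:ℝ)/2 + ε) := by
    intro a ha
    have h := hexp a ha
    simp only [hchi] at h
    simpa only [hU] using h
  have htw' : ∀ m : ZMod p, ‖Tm m‖ ≤ Cexp * n * (p:ℝ) ^ ((1:ℝ)/2) := by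
    intro m
    have h := htw m
    simp only [hchi] at h
    simpa only [hTm] using h
  -- Fourier inversion
  have hinv : ∀ z : ZMod p, F z = (p:ℂ)⁻¹ * ∑ m : ZMod p, Tm m * χ (-(m * z)) := by
    intro z
    have key : ∑ m : ZMod p, Tm m * χ (-(m * z)) = (p:ℂ) * F z := by
      have step1 : ∀ m : ZMod p, Tm m * χ (-(m * z))
          = ∑ w' ∈ D, (symAngle n (ψ w') : ℂ) * χ ((w' - z) * m) := by
        intro m
        simp only [hTm]
        rw [Finset.sum_mul]
        refine Finset.sum_congr rfl fun w' _ => ?_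
        rw [mul_assoc, ← AddChar.map_add_eq_mul]
        congr 1
        ring
      calc ∑ m : ZMod p, Tm m * χ (-(m * z))
          = ∑ m : ZMod p, ∑ w' ∈ D, (symAngle n (ψ w') : ℂ) * χ ((w' - z) * m) :=
            Finset.sum_congr rfl fun m _ => step1 m
        _ = ∑ w' ∈ D, ∑ m : ZMod p, (symAngle n (ψ w') : ℂ) * χ ((w' - z) * m) :=
            Finset.sum_comm
        _ = ∑ w' ∈ D, (symAngle n (ψ w') : ℂ) * ∑ m : ZMod p, χ ((w' - z) * m) := by
            simp only [Finset.mul_sum]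
        _ = ∑ w' ∈ D, (symAngle n (ψ w') : ℂ) * (if w' - z = 0 then (p:ℂ) else 0) := by
            simp only [horth]
        _ = ∑ w' ∈ D, (if w' = z then (symAngle n (ψ w') : ℂ) * (p:ℂ) else 0) := by
            simp only [sub_eq_zero, mul_ite, mul_zero]
        _ = if z ∈ D then (symAngle n (ψ z) : ℂ) * (p:ℂ) else 0 :=
            Finset.sum_ite_eq' D z _
        _ = (p:ℂ) * F z := by
            simp only [hD, hF, Finset.mem_filter, Finset.mem_univ, true_and]
            split_ifs <;> ring
    rw [key, inv_mul_cancel_left₀ hpC]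
  -- rewrite the target sum
  have hsplit : Box.filter (fun x : ℤ × ℤ => ((x.1 : ℝ), (x.2 : ℝ)) ∈ W ∧ ¬ (p:ℤ) ∣ x.2 ∧
        Polynomial.eval ((x.1 : ZMod p) * (x.2 : ZMod p)⁻¹) Δ ≠ 0)
      = F₀.filter (fun x : ℤ × ℤ =>
          Polynomial.eval ((x.1 : ZMod p) * (x.2 : ZMod p)⁻¹) Δ ≠ 0) := by
    rw [hF0, Finset.filter_filter]
    apply Finset.filter_congr
    intro x _
    simp [and_assoc]
  have hSsum : ∑ x ∈ Box.filter (fun x : ℤ × ℤ => ((x.1 : ℝ), (x.2 : ℝ)) ∈ W ∧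
        ¬ (p:ℤ) ∣ x.2 ∧ Polynomial.eval ((x.1 : ZMod p) * (x.2 : ZMod p)⁻¹) Δ ≠ 0),
          symAngle n (ψ ((x.1 : ZMod p) * (x.2 : ZMod p)⁻¹))
      = ∑ x ∈ F₀, (if Polynomial.eval ((x.1 : ZMod p) * (x.2 : ZMod p)⁻¹) Δ ≠ 0
          then symAngle n (ψ ((x.1 : ZMod p) * (x.2 : ZMod p)⁻¹)) else 0) := by
    rw [hsplit, Finset.sum_filter]
  have hcast : ((∑ x ∈ F₀, (if Polynomial.eval ((x.1 : ZMod p) * (x.2 : ZMod p)⁻¹) Δ ≠ 0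
        then symAngle n (ψ ((x.1 : ZMod p) * (x.2 : ZMod p)⁻¹)) else 0) : ℝ) : ℂ)
      = ∑ x ∈ F₀, F ((x.1 : ZMod p) * (x.2 : ZMod p)⁻¹) := by
    push_cast
    refine Finset.sum_congr rfl fun x _ => ?_
    simp only [hF]
    split_ifs <;> simp
  -- completion
  have hkey : ∑ x ∈ F₀, F ((x.1 : ZMod p) * (x.2 : ZMod p)⁻¹)
      = (p:ℂ)⁻¹ * ∑ m : ZMod p, Tm m * U (-m) := by
    calc ∑ x ∈ F₀, F ((x.1 : ZMod p) * (x.2 : ZMod p)⁻¹)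
        = ∑ x ∈ F₀, (p:ℂ)⁻¹ *
            ∑ m : ZMod p, Tm m * χ (-(m * ((x.1 : ZMod p) * (x.2 : ZMod p)⁻¹))) :=
          Finset.sum_congr rfl fun x _ => hinv _
      _ = (p:ℂ)⁻¹ * ∑ x ∈ F₀,
            ∑ m : ZMod p, Tm m * χ (-(m * ((x.1 : ZMod p) * (x.2 : ZMod p)⁻¹))) := by
          rw [Finset.mul_sum]
      _ = (p:ℂ)⁻¹ * ∑ m : ZMod p, ∑ x ∈ F₀,
            Tm m * χ (-(m * ((x.1 : ZMod p) * (x.2 : ZMod p)⁻¹))) := by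
          rw [Finset.sum_comm]
      _ = (p:ℂ)⁻¹ * ∑ m : ZMod p, Tm m * U (-m) := by
          congr 1
          refine Finset.sum_congr rfl fun m _ => ?_
          rw [← Finset.mul_sum]
          congr 1
          simp only [hU]
          refine Finset.sum_congr rfl fun x _ => ?_
          congr 1
          ring
  -- norm bounds
  have hcard : (F₀.card : ℝ) ≤ (T:ℝ) * (T:ℝ) := by
    have h1 : F₀.card ≤ Box.card := by
      rw [hF0]; exact Finset.card_filter_le _ _
    have h2 : Box.card = T * T := by
      rw [hBox, Finset.card_product, Int.card_Icc, Int.card_Icc,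
        show A + (T:ℤ) + 1 - (A + 1) = (T:ℤ) by ring,
        show B + (T:ℤ) + 1 - (B + 1) = (T:ℤ) by ring, Int.toNat_natCast]
    calc (F₀.card : ℝ) ≤ (Box.card : ℝ) := by exact_mod_cast h1
      _ = (T:ℝ) * (T:ℝ) := by rw [h2]; push_cast; ring
  have hUbound : ∀ a : ZMod p, ‖U a‖ ≤ (F₀.card : ℝ) := by
    intro a
    simp only [hU]
    calc ‖∑ x ∈ F₀, χ (a * (x.1 : ZMod p) * (x.2 : ZMod p)⁻¹)‖
        ≤ ∑ x ∈ F₀, ‖χ (a * (x.1 : ZMod p) * (x.2 : ZMod p)⁻¹)‖ := norm_sum_le _ _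
      _ = (F₀.card : ℝ) := by simp [hnormχ]
  have hsumU : ∑ m : ZMod p, ‖U (-m)‖
      ≤ (T:ℝ) * (T:ℝ) + (p:ℝ) * ((T:ℝ) ^ ((1:ℝ)/2) * (p:ℝ) ^ ((1:ℝ)/2 + ε)) := by
    rw [← Finset.sum_erase_add Finset.univ _ (Finset.mem_univ (0 : ZMod p)),
      add_comm ((T:ℝ) * (T:ℝ))]
    refine add_le_add ?_ ?_
    · refine (Finset.sum_le_sum (g := fun _ : ZMod p =>
        (T:ℝ) ^ ((1:ℝ)/2) * (p:ℝ) ^ ((1:ℝ)/2 + ε)) ?_).trans ?_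
      · intro m hm
        refine hexp' (-m) ?_
        have := (Finset.mem_erase.mp hm).1
        simpa using this
      · rw [Finset.sum_const, nsmul_eq_mul]
        refine mul_le_mul_of_nonneg_right ?_ (by positivity)
        have hle : (Finset.univ.erase (0 : ZMod p)).card ≤ p := by
          calc (Finset.univ.erase (0 : ZMod p)).card
              ≤ (Finset.univ : Finset (ZMod p)).card :=
                Finset.card_le_card (Finset.erase_subset _ _)
            _ = p := by rw [Finset.card_univ, ZMod.card]
        exact_mod_cast hle
    · rw [neg_zero]; exact (hUbound 0).trans hcard
  have htotal : ‖∑ m : ZMod p, Tm m * U (-m)‖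
      ≤ (Cexp * n * (p:ℝ) ^ ((1:ℝ)/2)) *
        ((T:ℝ) * (T:ℝ) + (p:ℝ) * ((T:ℝ) ^ ((1:ℝ)/2) * (p:ℝ) ^ ((1:ℝ)/2 + ε))) := by
    calc ‖∑ m : ZMod p, Tm m * U (-m)‖ ≤ ∑ m : ZMod p, ‖Tm m * U (-m)‖ := norm_sum_le _ _
      _ = ∑ m : ZMod p, ‖Tm m‖ * ‖U (-m)‖ := by simp [norm_mul]
      _ ≤ ∑ m : ZMod p, (Cexp * n * (p:ℝ) ^ ((1:ℝ)/2)) * ‖U (-m)‖ :=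
          Finset.sum_le_sum fun m _ => mul_le_mul_of_nonneg_right (htw' m) (norm_nonneg _)
      _ = (Cexp * n * (p:ℝ) ^ ((1:ℝ)/2)) * ∑ m : ZMod p, ‖U (-m)‖ := by
          rw [← Finset.mul_sum]
      _ ≤ (Cexp * n * (p:ℝ) ^ ((1:ℝ)/2)) *
            ((T:ℝ) * (T:ℝ) + (p:ℝ) * ((T:ℝ) ^ ((1:ℝ)/2) * (p:ℝ) ^ ((1:ℝ)/2 + ε))) := by
          refine mul_le_mul_of_nonneg_left hsumU (by positivity)
  -- arithmetic with rpow
  have e1 : (T:ℝ) * (T:ℝ) ≤ (T:ℝ) ^ ((1:ℝ)/2) * (p:ℝ) ^ ((3:ℝ)/2) := by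
    have h2 : (T:ℝ) * (T:ℝ) = (T:ℝ) ^ ((1:ℝ)/2) * (T:ℝ) ^ ((3:ℝ)/2) := by
      rw [← Real.rpow_add hT0, show (1:ℝ)/2 + 3/2 = ((2:ℕ):ℝ) by norm_num,
        Real.rpow_natCast]
      ring
    rw [h2]
    refine mul_le_mul_of_nonneg_left ?_ (by positivity)
    exact Real.rpow_le_rpow (le_of_lt hT0) hTle (by norm_num)
  have e2 : (p:ℝ) * ((T:ℝ) ^ ((1:ℝ)/2) * (p:ℝ) ^ ((1:ℝ)/2 + ε))
      = (T:ℝ) ^ ((1:ℝ)/2) * (p:ℝ) ^ ((3:ℝ)/2 + ε) := by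
    have h3 : (p:ℝ) ^ ((3:ℝ)/2 + ε) = (p:ℝ) * (p:ℝ) ^ ((1:ℝ)/2 + ε) := by
      rw [show (3:ℝ)/2 + ε = 1 + ((1:ℝ)/2 + ε) by ring, Real.rpow_add hp0, Real.rpow_one]
    rw [h3]; ring
  have e3 : (p:ℝ) ^ ((3:ℝ)/2) ≤ (p:ℝ) ^ ((3:ℝ)/2 + ε) :=
    Real.rpow_le_rpow_of_exponent_le hp1 (by linarith)
  have hX : (T:ℝ) * (T:ℝ) + (p:ℝ) * ((T:ℝ) ^ ((1:ℝ)/2) * (p:ℝ) ^ ((1:ℝ)/2 + ε))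
      ≤ 2 * ((T:ℝ) ^ ((1:ℝ)/2) * (p:ℝ) ^ ((3:ℝ)/2 + ε)) := by
    rw [e2]
    have h4 : (T:ℝ) ^ ((1:ℝ)/2) * (p:ℝ) ^ ((3:ℝ)/2)
        ≤ (T:ℝ) ^ ((1:ℝ)/2) * (p:ℝ) ^ ((3:ℝ)/2 + ε) :=
      mul_le_mul_of_nonneg_left e3 (by positivity)
    have h5 := e1.trans h4
    linarith
  have e4 : (p:ℝ)⁻¹ * ((p:ℝ) ^ ((1:ℝ)/2) * (p:ℝ) ^ ((3:ℝ)/2 + ε)) = (p:ℝ) ^ (1 + ε) := by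
    rw [← Real.rpow_add hp0, ← Real.rpow_neg_one, ← Real.rpow_add hp0]
    congr 1
    ring
  have harith : (p:ℝ)⁻¹ * ((Cexp * n * (p:ℝ) ^ ((1:ℝ)/2)) *
        ((T:ℝ) * (T:ℝ) + (p:ℝ) * ((T:ℝ) ^ ((1:ℝ)/2) * (p:ℝ) ^ ((1:ℝ)/2 + ε))))
      ≤ 2 * Cexp * n * (T:ℝ) ^ ((1:ℝ)/2) * (p:ℝ) ^ (1 + ε) := by
    calc (p:ℝ)⁻¹ * ((Cexp * n * (p:ℝ) ^ ((1:ℝ)/2)) *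
          ((T:ℝ) * (T:ℝ) + (p:ℝ) * ((T:ℝ) ^ ((1:ℝ)/2) * (p:ℝ) ^ ((1:ℝ)/2 + ε))))
        ≤ (p:ℝ)⁻¹ * ((Cexp * n * (p:ℝ) ^ ((1:ℝ)/2)) *
          (2 * ((T:ℝ) ^ ((1:ℝ)/2) * (p:ℝ) ^ ((3:ℝ)/2 + ε)))) := by
          refine mul_le_mul_of_nonneg_left (mul_le_mul_of_nonneg_left hX (by positivity))
            (by positivity)
      _ = (2 * Cexp * n * (T:ℝ) ^ ((1:ℝ)/2)) *
            ((p:ℝ)⁻¹ * ((p:ℝ) ^ ((1:ℝ)/2) * (p:ℝ) ^ ((3:ℝ)/2 + ε))) := by ring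
      _ = 2 * Cexp * n * (T:ℝ) ^ ((1:ℝ)/2) * (p:ℝ) ^ (1 + ε) := by rw [e4]
  -- conclusion
  rw [hSsum]
  have habs : |∑ x ∈ F₀, (if Polynomial.eval ((x.1 : ZMod p) * (x.2 : ZMod p)⁻¹) Δ ≠ 0
        then symAngle n (ψ ((x.1 : ZMod p) * (x.2 : ZMod p)⁻¹)) else 0)|
      = ‖(p:ℂ)⁻¹ * ∑ m : ZMod p, Tm m * U (-m)‖ := by
    rw [← hkey, ← hcast, Complex.norm_real, Real.norm_eq_abs]
  rw [habs]
  calc ‖(p:ℂ)⁻¹ * ∑ m : ZMod p, Tm m * U (-m)‖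
      = (p:ℝ)⁻¹ * ‖∑ m : ZMod p, Tm m * U (-m)‖ := by
        rw [norm_mul]
        congr 1
        simp
    _ ≤ (p:ℝ)⁻¹ * ((Cexp * n * (p:ℝ) ^ ((1:ℝ)/2)) *
          ((T:ℝ) * (T:ℝ) + (p:ℝ) * ((T:ℝ) ^ ((1:ℝ)/2) * (p:ℝ) ^ ((1:ℝ)/2 + ε)))) :=
        mul_le_mul_of_nonneg_left htotal (by positivity)
    _ ≤ 2 * Cexp * n * (T:ℝ) ^ ((1:ℝ)/2) * (p:ℝ) ^ (1 + ε) := harith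
end

section
/- Let m ≥ 2 be an integer, p prime, T ≥ 2. The number W of solutions to the congruence u₁v₂ ≡ u₂v₁ (mod p) with 1 ≤ u₁, u₂, v₁, v₂ ≤ T and gcd(u₁u₂v₁v₂, p) = 1 satisfies W ≪ T⁴/p + T²(log p)². -/
open Finset


lemma sum_inv_sqrt_le (M : ℕ) : ∑ a ∈ Finset.Icc 1 M, (1:ℝ)/Real.sqrt a ≤ 2 * Real.sqrt M := by
  induction M with
  | zero => simp
  | succ M ih =>
    rw [Finset.sum_Icc_succ_top (by omega)]
    have hs : Real.sqrt M ≥ 0 := Real.sqrt_nonneg _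
    have ht : Real.sqrt (M+1) > 0 := Real.sqrt_pos.2 (by positivity)
    have h1 : (Real.sqrt M)^2 = (M:ℝ) := Real.sq_sqrt (by positivity)
    have h2 : (Real.sqrt (M+1))^2 = ((M:ℝ)+1) := by
      rw [Real.sq_sqrt (by positivity)]
    have key2 : 1 / Real.sqrt (M+1) ≤ 2 * Real.sqrt (M+1) - 2 * Real.sqrt M := by
      rw [div_le_iff₀ ht]
      nlinarith [sq_nonneg (Real.sqrt M - Real.sqrt (M+1))]
    have key : 2 * Real.sqrt M + 1 / Real.sqrt (M+1) ≤ 2 * Real.sqrt (M+1) := by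
      linarith
    push_cast
    calc ∑ a ∈ Finset.Icc 1 M, (1:ℝ)/Real.sqrt a + 1/Real.sqrt (M+1)
        ≤ 2 * Real.sqrt M + 1/Real.sqrt (M+1) := by linarith
      _ ≤ 2 * Real.sqrt (M+1) := key

lemma sum_inv_le_log (M : ℕ) : ∑ x ∈ Finset.Icc 1 M, (1:ℝ)/x ≤ 1 + Real.log M := by
  induction M with
  | zero => simp
  | succ M ih =>
    rw [Finset.sum_Icc_succ_top (by omega)]
    rcases Nat.eq_zero_or_pos M with h | h
    · subst h; simp
    · have hM : (0:ℝ) < M := by exact_mod_cast h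
      have hM1 : (0:ℝ) < (M:ℝ)+1 := by linarith
      have hlog : Real.log ((M:ℝ)/((M:ℝ)+1)) ≤ (M:ℝ)/((M:ℝ)+1) - 1 :=
        Real.log_le_sub_one_of_pos (by positivity)
      rw [Real.log_div (ne_of_gt hM) (ne_of_gt hM1)] at hlog
      have : 1/((M:ℝ)+1) ≤ Real.log ((M:ℝ)+1) - Real.log M := by
        have : (M:ℝ)/((M:ℝ)+1) - 1 = -(1/((M:ℝ)+1)) := by field_simp; ring
        linarith [hlog, this ▸ hlog]
      push_cast
      linarith

lemma sum_inv_sq_le (M : ℕ) : ∑ x ∈ Finset.Icc 1 M, (1:ℝ)/(x:ℝ)^2 ≤ 2 := by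
  have key : ∀ M : ℕ, 1 ≤ M → ∑ x ∈ Finset.Icc 1 M, (1:ℝ)/(x:ℝ)^2 ≤ 2 - 1/M := by
    intro M hM
    induction M with
    | zero => omega
    | succ M ih =>
      rcases Nat.eq_zero_or_pos M with h | h
      · subst h; norm_num
      · rw [Finset.sum_Icc_succ_top (by omega)]
        have hM : (0:ℝ) < M := by exact_mod_cast h
        have h2 : (0:ℝ) < (M:ℝ)+1 := by linarith
        have : 1/((M:ℝ)+1)^2 ≤ 1/M - 1/((M:ℝ)+1) := by
          rw [div_sub_div _ _ (ne_of_gt hM) (ne_of_gt h2)]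
          rw [div_le_div_iff₀ (by positivity) (by positivity)]
          ring_nf
          nlinarith
        have ih' := ih h
        push_cast
        push_cast at ih'
        linarith
  rcases Nat.eq_zero_or_pos M with h | h
  · subst h; simp
  · have := key M h
    have hM : (0:ℝ) < M := by exact_mod_cast h
    have : 1/(M:ℝ) > 0 := by positivity
    linarith [key M h]

/-- A set of points whose "v-coordinate" lies in [1,T], determines the point,
and has pairwise differences divisible by q, has at most (T-1)/q + 1 elements. -/
lemma card_le_of_dvd_sub {α : Type*} [DecidableEq α] {s : Finset α} (v : α → ℕ) {q T : ℕ}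
    (hq : 0 < q)
    (hv : ∀ x ∈ s, 1 ≤ v x ∧ v x ≤ T)
    (hinj : ∀ x ∈ s, ∀ y ∈ s, v x = v y → x = y)
    (hdvd : ∀ x ∈ s, ∀ y ∈ s, v x ≤ v y → q ∣ v y - v x) :
    s.card ≤ (T-1)/q + 1 := by
  have : s.card ≤ (Finset.range ((T-1)/q + 1)).card := by
    apply Finset.card_le_card_of_injOn (fun x => (v x - 1)/q)
    · intro x hx
      simp only [Finset.mem_coe, Finset.mem_range]
      have := hv x hx
      have : (v x - 1)/q ≤ (T-1)/q := Nat.div_le_div_right (by omega)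
      omega
    · intro x hx y hy hxy
      have hxy' : (v x - 1)/q = (v y - 1)/q := hxy
      rcases le_total (v x) (v y) with h | h
      · rcases (hdvd x hx y hy h) with ⟨c, hc⟩
        have hx1 := (hv x hx).1
        have : c = 0 := by
          by_contra hc0
          have : v y - 1 ≥ (v x - 1) + q := by
            have : q ≤ q * c := Nat.le_mul_of_pos_right q (by omega)
            omega
          have h1 : (v x - 1 + q) / q ≤ (v y - 1) / q := Nat.div_le_div_right this
          rw [Nat.add_div_right _ hq] at h1
          rw [hxy'] at h1
          exact lt_irrefl _ (Nat.lt_of_lt_of_le (Nat.lt_succ_self _) h1)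
        rw [this, Nat.mul_zero] at hc
        exact hinj x hx y hy (by omega)
      · rcases (hdvd y hy x hx h) with ⟨c, hc⟩
        have hy1 := (hv y hy).1
        have : c = 0 := by
          by_contra hc0
          have : v x - 1 ≥ (v y - 1) + q := by
            have : q ≤ q * c := Nat.le_mul_of_pos_right q (by omega)
            omega
          have h1 : (v y - 1 + q) / q ≤ (v x - 1) / q := Nat.div_le_div_right this
          rw [Nat.add_div_right _ hq] at h1
          rw [← hxy'] at h1
          exact lt_irrefl _ (Nat.lt_of_lt_of_le (Nat.lt_succ_self _) h1)
        rw [this, Nat.mul_zero] at hc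
        exact hinj x hx y hy (by omega)
  simpa using this

lemma count_lin_zero (T a c h : ℕ) (hnd : ¬ (Nat.gcd a c ∣ h)) :
    ((Finset.Icc 1 T ×ˢ Finset.Icc 1 T).filter
      (fun bd : ℕ × ℕ => a * bd.1 = c * bd.2 + h)).card = 0 := by
  rw [Finset.card_eq_zero, Finset.filter_eq_empty_iff]
  rintro ⟨b, d⟩ _ hbd
  apply hnd
  have h1 : Nat.gcd a c ∣ a * b := Dvd.dvd.mul_right (Nat.gcd_dvd_left a c) b
  have h2 : Nat.gcd a c ∣ c * d := Dvd.dvd.mul_right (Nat.gcd_dvd_right a c) d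
  have : h = a * b - c * d := by simp only at hbd; omega
  rw [this]
  exact Nat.dvd_sub h1 h2

lemma count_lin (T a c h : ℕ) (ha : 1 ≤ a) (hc : 1 ≤ c) :
    (((Finset.Icc 1 T ×ˢ Finset.Icc 1 T).filter
      (fun bd : ℕ × ℕ => a * bd.1 = c * bd.2 + h)).card : ℝ)
      ≤ (Nat.gcd a c : ℝ) * T / Real.sqrt (a * c) + 1 := by
  set g := Nat.gcd a c with hg
  have hgpos : 0 < g := Nat.gcd_pos_of_pos_left _ ha
  have hga : g ∣ a := Nat.gcd_dvd_left a c
  have hgc : g ∣ c := Nat.gcd_dvd_right a c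
  have hcop : Nat.Coprime (a / g) (c / g) := Nat.coprime_div_gcd_div_gcd hgpos
  have hapos : 0 < a / g := Nat.div_pos (Nat.le_of_dvd ha hga) hgpos
  have hcpos : 0 < c / g := Nat.div_pos (Nat.le_of_dvd hc hgc) hgpos
  have hsq : (0:ℝ) < Real.sqrt (a * c) := Real.sqrt_pos.2 (by positivity)
  -- key divisibility: for two solutions, (c/g) ∣ b₂ - b₁ and (a/g) ∣ d₂ - d₁
  have key : ∀ x ∈ (Finset.Icc 1 T ×ˢ Finset.Icc 1 T).filter
      (fun bd : ℕ × ℕ => a * bd.1 = c * bd.2 + h),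
      ∀ y ∈ (Finset.Icc 1 T ×ˢ Finset.Icc 1 T).filter
      (fun bd : ℕ × ℕ => a * bd.1 = c * bd.2 + h),
      x.1 ≤ y.1 → (c/g ∣ y.1 - x.1) ∧ (a/g ∣ y.2 - x.2) := by
    rintro ⟨b1, d1⟩ hx ⟨b2, d2⟩ hy hle
    simp only [Finset.mem_filter] at hx hy
    have e1 : a * b1 = c * d1 + h := hx.2
    have e2 : a * b2 = c * d2 + h := hy.2
    have hdle : d1 ≤ d2 := by
      have : a * b1 ≤ a * b2 := Nat.mul_le_mul_left a hle
      have : c * d1 ≤ c * d2 := by omega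
      exact Nat.le_of_mul_le_mul_left this hc
    have hmul : a * (b2 - b1) = c * (d2 - d1) := by
      rw [Nat.mul_sub, Nat.mul_sub]; omega
    have hmul2 : (a/g) * (b2 - b1) = (c/g) * (d2 - d1) := by
      have ha' : a = g * (a/g) := (Nat.mul_div_cancel' hga).symm
      have hc' : c = g * (c/g) := (Nat.mul_div_cancel' hgc).symm
      apply Nat.eq_of_mul_eq_mul_left hgpos
      calc g * ((a/g) * (b2-b1)) = (g * (a/g)) * (b2-b1) := by ring
        _ = a * (b2-b1) := by rw [← ha']
        _ = c * (d2-d1) := hmul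
        _ = (g * (c/g)) * (d2-d1) := by rw [← hc']
        _ = g * ((c/g) * (d2-d1)) := by ring
    constructor
    · exact Nat.Coprime.dvd_of_dvd_mul_left hcop.symm ⟨d2 - d1, hmul2⟩
    · exact Nat.Coprime.dvd_of_dvd_mul_left hcop ⟨b2 - b1, hmul2.symm⟩
  have hmem : ∀ x ∈ (Finset.Icc 1 T ×ˢ Finset.Icc 1 T).filter
      (fun bd : ℕ × ℕ => a * bd.1 = c * bd.2 + h),
      (1 ≤ x.1 ∧ x.1 ≤ T) ∧ (1 ≤ x.2 ∧ x.2 ≤ T) ∧ a * x.1 = c * x.2 + h := by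
    rintro ⟨b, d⟩ hx
    simp only [Finset.mem_filter, Finset.mem_product, Finset.mem_Icc] at hx
    exact ⟨⟨hx.1.1.1, hx.1.1.2⟩, ⟨hx.1.2.1, hx.1.2.2⟩, hx.2⟩
  have hnum : (((T-1 : ℕ)):ℝ) * g ≤ (g:ℝ) * T := by
    have h1 : ((T-1 : ℕ):ℝ) ≤ (T:ℝ) := by exact_mod_cast Nat.sub_le T 1
    have h2 : (0:ℝ) ≤ g := by positivity
    nlinarith
  rcases le_total a c with hac | hca
  · -- use first coordinate, modulus c/g
    have hcard := card_le_of_dvd_sub (s := (Finset.Icc 1 T ×ˢ Finset.Icc 1 T).filter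
        (fun bd : ℕ × ℕ => a * bd.1 = c * bd.2 + h)) Prod.fst hcpos
      (fun x hx => (hmem x hx).1)
      (fun x hx y hy hxy => by
        have ex := (hmem x hx).2.2
        have ey := (hmem y hy).2.2
        have h1 : c * x.2 = c * y.2 := by rw [hxy] at ex; omega
        have h2 : x.2 = y.2 := Nat.eq_of_mul_eq_mul_left hc h1
        exact Prod.ext hxy h2)
      (fun x hx y hy hle => (key x hx y hy hle).1)
    have hcR : (0:ℝ) < c := by exact_mod_cast hc
    have hsqc : Real.sqrt ((a:ℝ) * c) ≤ c := by
      have hax : ((a:ℝ) * c) ≤ (c:ℝ)^2 := by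
        have : (a:ℝ) ≤ c := by exact_mod_cast hac
        nlinarith
      calc Real.sqrt ((a:ℝ) * c) ≤ Real.sqrt ((c:ℝ)^2) := Real.sqrt_le_sqrt hax
        _ = c := Real.sqrt_sq (by positivity)
    calc ((((Finset.Icc 1 T ×ˢ Finset.Icc 1 T).filter
          (fun bd : ℕ × ℕ => a * bd.1 = c * bd.2 + h)).card : ℕ) : ℝ)
        ≤ (((T-1)/(c/g) + 1 : ℕ) : ℝ) := by exact_mod_cast hcard
      _ = (((T-1)/(c/g) : ℕ) : ℝ) + 1 := by push_cast; ring
      _ ≤ ((T-1 : ℕ):ℝ)/((c/g : ℕ):ℝ) + 1 := by gcongr; exact Nat.cast_div_le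
      _ ≤ (g:ℝ) * T / Real.sqrt (a * c) + 1 := by
          gcongr ?_ + 1
          rw [Nat.cast_div hgc (by exact_mod_cast hgpos.ne'), div_div_eq_mul_div]
          push_cast
          exact div_le_div₀ (by positivity) hnum hsq hsqc
  · -- use second coordinate, modulus a/g
    have hcard := card_le_of_dvd_sub (s := (Finset.Icc 1 T ×ˢ Finset.Icc 1 T).filter
        (fun bd : ℕ × ℕ => a * bd.1 = c * bd.2 + h)) Prod.snd hapos
      (fun x hx => (hmem x hx).2.1)
      (fun x hx y hy hxy => by
        have ex := (hmem x hx).2.2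
        have ey := (hmem y hy).2.2
        have h1 : a * x.1 = a * y.1 := by rw [hxy] at ex; omega
        have h2 : x.1 = y.1 := Nat.eq_of_mul_eq_mul_left ha h1
        exact Prod.ext h2 hxy)
      (fun x hx y hy hle => by
        have ex := (hmem x hx).2.2
        have ey := (hmem y hy).2.2
        have h1 : c * x.2 ≤ c * y.2 := Nat.mul_le_mul_left c hle
        have h2 : a * x.1 ≤ a * y.1 := by omega
        exact (key x hx y hy (Nat.le_of_mul_le_mul_left h2 ha)).2)
    have haR : (0:ℝ) < a := by exact_mod_cast ha
    have hsqa : Real.sqrt ((a:ℝ) * c) ≤ a := by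
      have hax : ((a:ℝ) * c) ≤ (a:ℝ)^2 := by
        have : (c:ℝ) ≤ a := by exact_mod_cast hca
        nlinarith
      calc Real.sqrt ((a:ℝ) * c) ≤ Real.sqrt ((a:ℝ)^2) := Real.sqrt_le_sqrt hax
        _ = a := Real.sqrt_sq (by positivity)
    calc ((((Finset.Icc 1 T ×ˢ Finset.Icc 1 T).filter
          (fun bd : ℕ × ℕ => a * bd.1 = c * bd.2 + h)).card : ℕ) : ℝ)
        ≤ (((T-1)/(a/g) + 1 : ℕ) : ℝ) := by exact_mod_cast hcard
      _ = (((T-1)/(a/g) : ℕ) : ℝ) + 1 := by push_cast; ring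
      _ ≤ ((T-1 : ℕ):ℝ)/((a/g : ℕ):ℝ) + 1 := by gcongr; exact Nat.cast_div_le
      _ ≤ (g:ℝ) * T / Real.sqrt (a * c) + 1 := by
          gcongr ?_ + 1
          rw [Nat.cast_div hga (by exact_mod_cast hgpos.ne'), div_div_eq_mul_div]
          push_cast
          exact div_le_div₀ (by positivity) hnum hsq hsqa

lemma filter_dvd_eq_image (T d : ℕ) (hd : 0 < d) :
    (Finset.Icc 1 T).filter (fun a => d ∣ a) = (Finset.Icc 1 (T/d)).image (fun α => d * α) := by
  ext e
  simp only [Finset.mem_filter, Finset.mem_Icc, Finset.mem_image]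
  constructor
  · rintro ⟨⟨h1, h2⟩, k, rfl⟩
    refine ⟨k, ⟨?_, ?_⟩, rfl⟩
    · rcases Nat.eq_zero_or_pos k with rfl | h
      · simp at h1
      · exact h
    · rw [Nat.le_div_iff_mul_le hd, Nat.mul_comm]; exact h2
  · rintro ⟨α, ⟨h1, h2⟩, rfl⟩
    rw [Nat.le_div_iff_mul_le hd] at h2
    exact ⟨⟨Nat.mul_pos hd h1, by rw [Nat.mul_comm]; exact h2⟩, ⟨α, rfl⟩⟩

lemma indicator_sum_le (T d : ℕ) (hd : 1 ≤ d) :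
    ∑ a ∈ Finset.Icc 1 T, (if d ∣ a then (1:ℝ)/Real.sqrt a else 0)
      ≤ 2 * Real.sqrt T / d := by
  rw [← Finset.sum_filter, filter_dvd_eq_image T d hd]
  rw [Finset.sum_image (fun x _ y _ h => Nat.eq_of_mul_eq_mul_left hd h)]
  simp only [Nat.cast_mul]
  have hdR : (0:ℝ) < d := by exact_mod_cast hd
  have hsd : (0:ℝ) < Real.sqrt d := Real.sqrt_pos.2 hdR
  have step1 : ∑ α ∈ Finset.Icc 1 (T/d), (1:ℝ)/Real.sqrt (d*α)
      = (1/Real.sqrt d) * ∑ α ∈ Finset.Icc 1 (T/d), (1:ℝ)/Real.sqrt α := by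
    rw [Finset.mul_sum]
    apply Finset.sum_congr rfl
    intro α hα
    push_cast
    rw [Real.sqrt_mul (by positivity)]
    field_simp
  rw [step1]
  have hdd : Real.sqrt d * Real.sqrt d = (d:ℝ) := Real.mul_self_sqrt hdR.le
  have step2 : ∑ α ∈ Finset.Icc 1 (T/d), (1:ℝ)/Real.sqrt α ≤ 2 * Real.sqrt ((T:ℝ)/d) := by
    refine (sum_inv_sqrt_le (T/d)).trans ?_
    have : ((T/d : ℕ) : ℝ) ≤ (T:ℝ)/d := Nat.cast_div_le
    gcongr
  calc (1/Real.sqrt d) * ∑ α ∈ Finset.Icc 1 (T/d), (1:ℝ)/Real.sqrt α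
      ≤ (1/Real.sqrt d) * (2 * Real.sqrt ((T:ℝ)/d)) := by
        apply mul_le_mul_of_nonneg_left step2 (by positivity)
    _ = 2 * Real.sqrt T / d := by
        rw [Real.sqrt_div (by positivity : (0:ℝ) ≤ (T:ℝ))]
        field_simp
        rw [Real.sq_sqrt hdR.le]; ring

lemma sumA (T n : ℕ) (hn : 1 ≤ n) :
    ∑ ac ∈ Finset.Icc 1 T ×ˢ Finset.Icc 1 T,
      (if Nat.gcd ac.1 ac.2 ∣ n then (Nat.gcd ac.1 ac.2 : ℝ) * T / Real.sqrt (ac.1*ac.2) else 0)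
    ≤ 4 * (T:ℝ)^2 * ∑ d ∈ n.divisors, (1:ℝ)/d := by
  have step1 : ∀ ac ∈ Finset.Icc 1 T ×ˢ Finset.Icc 1 T,
      (if Nat.gcd ac.1 ac.2 ∣ n then (Nat.gcd ac.1 ac.2 : ℝ) * T / Real.sqrt (ac.1*ac.2) else 0)
      ≤ ∑ d ∈ n.divisors,
          (if d ∣ ac.1 ∧ d ∣ ac.2 then (d:ℝ) * T / Real.sqrt (ac.1*ac.2) else 0) := by
    intro ac hac
    have hnonneg : ∀ d ∈ n.divisors,
        0 ≤ (if d ∣ ac.1 ∧ d ∣ ac.2 then (d:ℝ) * T / Real.sqrt (ac.1*ac.2) else 0) := by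
      intro d _
      split <;> positivity
    by_cases hgd : Nat.gcd ac.1 ac.2 ∣ n
    · rw [if_pos hgd]
      have hmem : Nat.gcd ac.1 ac.2 ∈ n.divisors := Nat.mem_divisors.2 ⟨hgd, by omega⟩
      have := Finset.single_le_sum hnonneg hmem
      rwa [if_pos ⟨Nat.gcd_dvd_left _ _, Nat.gcd_dvd_right _ _⟩] at this
    · rw [if_neg hgd]
      exact Finset.sum_nonneg hnonneg
  refine (Finset.sum_le_sum step1).trans ?_
  rw [Finset.sum_comm]
  have step3 : ∀ d ∈ n.divisors,
      ∑ ac ∈ Finset.Icc 1 T ×ˢ Finset.Icc 1 T,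
        (if d ∣ ac.1 ∧ d ∣ ac.2 then (d:ℝ) * T / Real.sqrt (ac.1*ac.2) else 0)
      ≤ 4 * (T:ℝ)^2 * (1/d) := by
    intro d hd
    have hd1 : 1 ≤ d := (Nat.pos_of_mem_divisors hd)
    have hdR : (0:ℝ) < d := by exact_mod_cast hd1
    have heq : ∀ ac : ℕ × ℕ,
        (if d ∣ ac.1 ∧ d ∣ ac.2 then (d:ℝ) * T / Real.sqrt (ac.1*ac.2) else 0)
        = (d:ℝ) * T * ((if d ∣ ac.1 then (1:ℝ)/Real.sqrt ac.1 else 0) *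
            (if d ∣ ac.2 then (1:ℝ)/Real.sqrt ac.2 else 0)) := by
      rintro ⟨a, c⟩
      dsimp only
      by_cases h1 : d ∣ a
      · by_cases h2 : d ∣ c
        · rw [if_pos (⟨h1, h2⟩ : d ∣ a ∧ d ∣ c), if_pos h1, if_pos h2]
          rw [Real.sqrt_mul (by positivity : (0:ℝ) ≤ (a:ℝ))]
          rw [div_eq_mul_inv, mul_inv]
          ring
        · rw [if_neg (by tauto), if_neg h2]; ring
      · rw [if_neg (by tauto), if_neg h1]; ring
    calc ∑ ac ∈ Finset.Icc 1 T ×ˢ Finset.Icc 1 T,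
          (if d ∣ ac.1 ∧ d ∣ ac.2 then (d:ℝ) * T / Real.sqrt (ac.1*ac.2) else 0)
        = (d:ℝ) * T * ((∑ a ∈ Finset.Icc 1 T, (if d ∣ a then (1:ℝ)/Real.sqrt a else 0)) *
            (∑ c ∈ Finset.Icc 1 T, (if d ∣ c then (1:ℝ)/Real.sqrt c else 0))) := by
          rw [Finset.sum_congr rfl (fun ac _ => heq ac), ← Finset.mul_sum]
          congr 1
          rw [Finset.sum_product]
          dsimp only
          exact (Finset.sum_mul_sum (Finset.Icc 1 T) (Finset.Icc 1 T) (fun a => if d ∣ a then (1:ℝ)/Real.sqrt a else 0) (fun c => if d ∣ c then (1:ℝ)/Real.sqrt c else 0)).symm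
      _ ≤ (d:ℝ) * T * ((2 * Real.sqrt T / d) * (2 * Real.sqrt T / d)) := by
          have hs := indicator_sum_le T d hd1
          have hnn : (0:ℝ) ≤ ∑ a ∈ Finset.Icc 1 T, (if d ∣ a then (1:ℝ)/Real.sqrt a else 0) :=
            Finset.sum_nonneg (fun a _ => by split <;> positivity)
          gcongr
      _ = 4 * (T:ℝ)^2 * (1/d) := by
          have hdne : (d:ℝ) ≠ 0 := hdR.ne'
          have hTT : Real.sqrt T * Real.sqrt T = (T:ℝ) := Real.mul_self_sqrt (by positivity)
          field_simp
          linear_combination (4*(T:ℝ)) * hTT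
  calc ∑ d ∈ n.divisors, ∑ ac ∈ Finset.Icc 1 T ×ˢ Finset.Icc 1 T,
        (if d ∣ ac.1 ∧ d ∣ ac.2 then (d:ℝ) * T / Real.sqrt (ac.1*ac.2) else 0)
      ≤ ∑ d ∈ n.divisors, 4 * (T:ℝ)^2 * (1/d) := Finset.sum_le_sum step3
    _ = 4 * (T:ℝ)^2 * ∑ d ∈ n.divisors, (1:ℝ)/d := by rw [Finset.mul_sum]

lemma sumB (p k : ℕ) (hp : p.Prime) (hk : 1 ≤ k) :
    ∑ d ∈ (k*p).divisors, (1:ℝ)/d ≤ 2 * ∑ e ∈ k.divisors, (1:ℝ)/e := by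
  have hkp : k * p ≠ 0 := Nat.mul_ne_zero (by omega) hp.pos.ne'
  have hsub : (k*p).divisors ⊆ k.divisors ∪ (k.divisors.image (fun e => p * e)) := by
    intro d hd
    rw [Nat.mem_divisors] at hd
    rcases hd with ⟨hdvd, _⟩
    by_cases hpd : p ∣ d
    · rcases hpd with ⟨e, rfl⟩
      have : e ∣ k := by
        have h2 : p * e ∣ p * k := by
          rw [Nat.mul_comm p k]
          exact hdvd
        exact (Nat.mul_dvd_mul_iff_left hp.pos).1 h2
      exact Finset.mem_union_right _ (Finset.mem_image.2 ⟨e, Nat.mem_divisors.2 ⟨this, by omega⟩, rfl⟩)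
    · have hcop : Nat.Coprime d p := ((Nat.Prime.coprime_iff_not_dvd hp).2 hpd).symm
      have : d ∣ k := hcop.dvd_of_dvd_mul_right hdvd
      exact Finset.mem_union_left _ (Nat.mem_divisors.2 ⟨this, by omega⟩)
  have hnonneg : ∀ d ∈ k.divisors ∪ (k.divisors.image (fun e => p * e)), 0 ≤ (1:ℝ)/d := by
    intro d _; positivity
  calc ∑ d ∈ (k*p).divisors, (1:ℝ)/d
      ≤ ∑ d ∈ k.divisors ∪ (k.divisors.image (fun e => p * e)), (1:ℝ)/d :=
        Finset.sum_le_sum_of_subset_of_nonneg hsub (fun d hd _ => by positivity)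
    _ ≤ ∑ d ∈ k.divisors, (1:ℝ)/d + ∑ d ∈ k.divisors.image (fun e => p * e), (1:ℝ)/d := by
        have := Finset.sum_union_inter (s₁ := k.divisors) (s₂ := k.divisors.image (fun e => p * e))
          (f := fun d => (1:ℝ)/d)
        have hnn : 0 ≤ ∑ d ∈ k.divisors ∩ (k.divisors.image (fun e => p * e)), (1:ℝ)/d :=
          Finset.sum_nonneg (fun d _ => by positivity)
        linarith
    _ ≤ ∑ e ∈ k.divisors, (1:ℝ)/e + ∑ e ∈ k.divisors, (1:ℝ)/e := by
        gcongr ∑ e ∈ k.divisors, (1:ℝ)/e + ?_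
        rw [Finset.sum_image (fun x _ y _ h => Nat.eq_of_mul_eq_mul_left hp.pos h)]
        apply Finset.sum_le_sum
        intro e he
        have he1 : 1 ≤ e := Nat.pos_of_mem_divisors he
        have h1 : (0:ℝ) < e := by exact_mod_cast he1
        have h2 : (e:ℝ) ≤ ((p*e : ℕ):ℝ) := by
          push_cast
          have hp1 : (1:ℝ) ≤ p := by exact_mod_cast hp.one_lt.le
          nlinarith
        exact one_div_le_one_div_of_le h1 h2
    _ = 2 * ∑ e ∈ k.divisors, (1:ℝ)/e := by ring

lemma sumC (K : ℕ) : ∑ k ∈ Finset.Icc 1 K, ∑ e ∈ k.divisors, (1:ℝ)/e ≤ 2 * K := by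
  have step1 : ∀ k ∈ Finset.Icc 1 K, ∑ e ∈ k.divisors, (1:ℝ)/e
      = ∑ e ∈ Finset.Icc 1 K, (if e ∣ k then (1:ℝ)/e else 0) := by
    intro k hk
    rw [Finset.mem_Icc] at hk
    rw [← Finset.sum_filter]
    apply Finset.sum_congr
    · ext e
      rw [Nat.mem_divisors, Finset.mem_filter, Finset.mem_Icc]
      constructor
      · rintro ⟨h1, h2⟩
        exact ⟨⟨Nat.pos_of_dvd_of_pos h1 (by omega), (Nat.le_of_dvd (by omega) h1).trans hk.2⟩, h1⟩
      · rintro ⟨_, h⟩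
        exact ⟨h, by omega⟩
    · intros; rfl
  rw [Finset.sum_congr rfl step1, Finset.sum_comm]
  have step2 : ∀ e ∈ Finset.Icc 1 K, ∑ k ∈ Finset.Icc 1 K, (if e ∣ k then (1:ℝ)/e else 0)
      ≤ (K:ℝ) * (1/(e:ℝ)^2) := by
    intro e he
    rw [Finset.mem_Icc] at he
    rw [← Finset.sum_filter]
    have hcard : ((Finset.Icc 1 K).filter (fun k => e ∣ k)).card ≤ K / e := by
      have hh := Nat.Ioc_filter_dvd_card_eq_div K e
      have heq : Finset.Icc 1 K = Finset.Ioc 0 K := by ext x; simp [Nat.lt_iff_add_one_le]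
      rw [heq]
      exact le_of_eq hh
    rw [Finset.sum_const, nsmul_eq_mul]
    have h1 : (((Finset.Icc 1 K).filter (fun k => e ∣ k)).card : ℝ) ≤ (K:ℝ)/e := by
      calc (((Finset.Icc 1 K).filter (fun k => e ∣ k)).card : ℝ) ≤ ((K/e : ℕ) : ℝ) := by
            exact_mod_cast hcard
        _ ≤ (K:ℝ)/e := Nat.cast_div_le
    have he1 : (0:ℝ) < e := by exact_mod_cast he.1
    calc (((Finset.Icc 1 K).filter (fun k => e ∣ k)).card : ℝ) * (1/e)
        ≤ ((K:ℝ)/e) * (1/e) := by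
          apply mul_le_mul_of_nonneg_right h1 (by positivity)
      _ = (K:ℝ) * (1/(e:ℝ)^2) := by rw [pow_two, ← one_div_mul_one_div]; ring
  calc ∑ e ∈ Finset.Icc 1 K, ∑ k ∈ Finset.Icc 1 K, (if e ∣ k then (1:ℝ)/e else 0)
      ≤ ∑ e ∈ Finset.Icc 1 K, (K:ℝ) * (1/(e:ℝ)^2) := Finset.sum_le_sum step2
    _ = (K:ℝ) * ∑ e ∈ Finset.Icc 1 K, (1:ℝ)/(e:ℝ)^2 := by rw [← Finset.mul_sum]
    _ ≤ (K:ℝ) * 2 := mul_le_mul_of_nonneg_left (sum_inv_sq_le K) (by positivity)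
    _ = 2 * K := by ring

lemma card_F_eq (T h : ℕ) :
    ((((Finset.Icc 1 T ×ˢ Finset.Icc 1 T) ×ˢ (Finset.Icc 1 T ×ˢ Finset.Icc 1 T)).filter
      (fun y : (ℕ × ℕ) × ℕ × ℕ => y.1.1 * y.2.2 = y.2.1 * y.1.2 + h)).card)
    = ∑ ac ∈ Finset.Icc 1 T ×ˢ Finset.Icc 1 T,
        ((Finset.Icc 1 T ×ˢ Finset.Icc 1 T).filter
          (fun bd : ℕ × ℕ => ac.1 * bd.1 = ac.2 * bd.2 + h)).card := by
  set B4 := ((Finset.Icc 1 T ×ˢ Finset.Icc 1 T) ×ˢ (Finset.Icc 1 T ×ˢ Finset.Icc 1 T))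
  set G := B4.filter (fun y : (ℕ × ℕ) × ℕ × ℕ => y.1.1 * y.2.2 = y.2.1 * y.1.2 + h) with hG
  rw [Finset.card_eq_sum_card_fiberwise
    (f := fun y : (ℕ × ℕ) × ℕ × ℕ => (y.1.1, y.2.1)) (t := Finset.Icc 1 T ×ˢ Finset.Icc 1 T)
    (by
      intro y hy
      rw [Finset.mem_coe, hG, Finset.mem_filter] at hy
      have := hy.1
      simp only [B4, Finset.mem_product] at this
      simp only [Finset.mem_coe, Finset.mem_product]
      exact ⟨this.1.1, this.2.1⟩)]
  apply Finset.sum_congr rfl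
  rintro ⟨a, c⟩ hac
  apply Finset.card_bij' (fun y _ => (y.2.2, y.1.2))
    (fun bd _ => (((a, bd.2), (c, bd.1)) : (ℕ × ℕ) × ℕ × ℕ))
  · rintro ⟨⟨u1, v1⟩, u2, v2⟩ hy
    rw [Finset.mem_filter] at hy
    obtain ⟨hyG, h6⟩ := hy
    rw [Prod.mk.injEq] at h6
    rw [hG, Finset.mem_filter] at hyG
    obtain ⟨hyB, h5⟩ := hyG
    simp only [B4, Finset.mem_product] at hyB
    obtain ⟨⟨h1, h2⟩, h3, h4⟩ := hyB
    rw [Finset.mem_filter, Finset.mem_product]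
    refine ⟨⟨h4, h2⟩, ?_⟩
    dsimp only at h5 h6 ⊢
    rw [← h6.1, ← h6.2]
    exact h5
  · rintro ⟨b, d⟩ hbd
    rw [Finset.mem_filter, Finset.mem_product] at hbd
    obtain ⟨⟨hb, hd⟩, heq⟩ := hbd
    rw [Finset.mem_product] at hac
    rw [Finset.mem_filter]
    refine ⟨?_, rfl⟩
    rw [hG, Finset.mem_filter]
    constructor
    · simp only [B4, Finset.mem_product]
      exact ⟨⟨hac.1, hd⟩, hac.2, hb⟩
    · exact heq
  · rintro ⟨⟨u1, v1⟩, u2, v2⟩ hy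
    rw [Finset.mem_filter] at hy
    have h6 := hy.2
    rw [Prod.mk.injEq] at h6
    simp [h6.1.symm, h6.2.symm]
  · rintro ⟨b, d⟩ _
    rfl

lemma diag_card (T : ℕ) :
    ((((Finset.Icc 1 T ×ˢ Finset.Icc 1 T) ×ˢ (Finset.Icc 1 T ×ˢ Finset.Icc 1 T)).filter
      (fun y : (ℕ × ℕ) × ℕ × ℕ => y.1.1 * y.2.2 = y.2.1 * y.1.2)).card)
    ≤ (((Finset.Icc 1 T ×ˢ Finset.Icc 1 T).filter (fun w : ℕ × ℕ => w.1 * w.2 ≤ T)).card) ^ 2 := by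
  set s := (Finset.Icc 1 T ×ˢ Finset.Icc 1 T).filter (fun w : ℕ × ℕ => w.1 * w.2 ≤ T) with hs
  have : (s ×ˢ s).card = s.card ^ 2 := by rw [Finset.card_product, sq]
  rw [← this]
  apply Finset.card_le_card_of_injOn
    (fun y => ((y.1.1 / Nat.gcd y.1.1 y.2.1, Nat.gcd y.1.1 y.2.1),
      (y.2.1 / Nat.gcd y.1.1 y.2.1, y.1.2 / (y.1.1 / Nat.gcd y.1.1 y.2.1))))
  · rintro ⟨⟨a, d⟩, c, b⟩ hy
    rw [Finset.mem_coe, Finset.mem_filter] at hy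
    obtain ⟨hyB, heq⟩ := hy
    simp only [Finset.mem_product, Finset.mem_Icc] at hyB
    obtain ⟨⟨⟨ha1, ha2⟩, hd1, hd2⟩, ⟨hc1, hc2⟩, hb1, hb2⟩ := hyB
    dsimp only at heq ⊢
    -- heq : a * b = c * d
    set g := Nat.gcd a c with hg
    have hgpos : 0 < g := Nat.gcd_pos_of_pos_left _ ha1
    have hga : g ∣ a := Nat.gcd_dvd_left a c
    have hgc : g ∣ c := Nat.gcd_dvd_right a c
    set x := a / g with hx
    set z := c / g with hz
    have hxa : g * x = a := Nat.mul_div_cancel' hga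
    have hzc : g * z = c := Nat.mul_div_cancel' hgc
    have hxpos : 0 < x := Nat.div_pos (Nat.le_of_dvd ha1 hga) hgpos
    have hzpos : 0 < z := Nat.div_pos (Nat.le_of_dvd hc1 hgc) hgpos
    have hcop : Nat.Coprime x z := Nat.coprime_div_gcd_div_gcd hgpos
    have hkey : x * b = z * d := by
      apply Nat.eq_of_mul_eq_mul_left hgpos
      calc g * (x * b) = (g * x) * b := by ring
        _ = a * b := by rw [hxa]
        _ = c * d := heq
        _ = (g * z) * d := by rw [hzc]
        _ = g * (z * d) := by ring
    have hxd : x ∣ d := hcop.dvd_of_dvd_mul_left ⟨b, hkey.symm⟩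
    set t := d / x with ht
    have hxt : x * t = d := Nat.mul_div_cancel' hxd
    have htpos : 0 < t := Nat.div_pos (Nat.le_of_dvd hd1 hxd) hxpos
    have hb : z * t = b := by
      apply Nat.eq_of_mul_eq_mul_left hxpos
      calc x * (z * t) = z * (x * t) := by ring
        _ = z * d := by rw [hxt]
        _ = x * b := hkey.symm
    rw [Finset.mem_coe, Finset.mem_product]
    constructor
    · rw [hs, Finset.mem_filter, Finset.mem_product, Finset.mem_Icc, Finset.mem_Icc]
      refine ⟨⟨⟨hxpos, ?_⟩, hgpos, ?_⟩, ?_⟩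
      · exact le_trans (Nat.div_le_self a g) ha2
      · exact le_trans (Nat.le_of_dvd ha1 hga) ha2
      · dsimp only
        rw [Nat.mul_comm x g, hxa]
        exact ha2
    · rw [hs, Finset.mem_filter, Finset.mem_product, Finset.mem_Icc, Finset.mem_Icc]
      refine ⟨⟨⟨hzpos, ?_⟩, htpos, ?_⟩, ?_⟩
      · exact le_trans (Nat.div_le_self c g) hc2
      · exact le_trans (le_trans (Nat.div_le_self d x) hd2) (le_refl T)
      · dsimp only
        rw [hb]
        exact hb2
  · rintro ⟨⟨a, d⟩, c, b⟩ hy ⟨⟨a', d'⟩, c', b'⟩ hy' hfeq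
    simp only [Finset.mem_coe, Finset.mem_filter] at hy hy'
    obtain ⟨hyB, heq⟩ := hy
    obtain ⟨hyB', heq'⟩ := hy'
    simp only [Finset.mem_product, Finset.mem_Icc] at hyB hyB'
    obtain ⟨⟨⟨ha1, _⟩, hd1, _⟩, ⟨hc1, _⟩, hb1, _⟩ := hyB
    obtain ⟨⟨⟨ha1', _⟩, hd1', _⟩, ⟨hc1', _⟩, hb1', _⟩ := hyB'
    dsimp only at heq heq' hfeq
    rw [Prod.mk.injEq, Prod.mk.injEq, Prod.mk.injEq] at hfeq
    obtain ⟨⟨hfx, hfg⟩, hfz, hft⟩ := hfeq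
    -- reconstruct
    set g := Nat.gcd a c
    set g' := Nat.gcd a' c'
    have hgpos : 0 < g := Nat.gcd_pos_of_pos_left _ ha1
    have hga : g ∣ a := Nat.gcd_dvd_left a c
    have hgc : g ∣ c := Nat.gcd_dvd_right a c
    have hga' : g' ∣ a' := Nat.gcd_dvd_left a' c'
    have hgc' : g' ∣ c' := Nat.gcd_dvd_right a' c'
    have hxa : g * (a / g) = a := Nat.mul_div_cancel' hga
    have hzc : g * (c / g) = c := Nat.mul_div_cancel' hgc
    have hxa' : g' * (a' / g') = a' := Nat.mul_div_cancel' hga'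
    have hzc' : g' * (c' / g') = c' := Nat.mul_div_cancel' hgc'
    have haa : a = a' := by rw [← hxa, ← hxa', hfx, hfg]
    have hcc : c = c' := by rw [← hzc, ← hzc', hfz, hfg]
    -- d and b
    have hcop : Nat.Coprime (a/g) (c/g) := Nat.coprime_div_gcd_div_gcd hgpos
    have hxpos : 0 < a/g := Nat.div_pos (Nat.le_of_dvd ha1 hga) hgpos
    have hgpos' : 0 < g' := Nat.gcd_pos_of_pos_left _ ha1'
    have hxpos' : 0 < a'/g' := Nat.div_pos (Nat.le_of_dvd ha1' hga') hgpos'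
    have hcop' : Nat.Coprime (a'/g') (c'/g') := Nat.coprime_div_gcd_div_gcd hgpos'
    have hkey : (a/g) * b = (c/g) * d := by
      apply Nat.eq_of_mul_eq_mul_left hgpos
      calc g * ((a/g) * b) = (g * (a/g)) * b := by ring
        _ = a * b := by rw [hxa]
        _ = c * d := heq
        _ = (g * (c/g)) * d := by rw [hzc]
        _ = g * ((c/g) * d) := by ring
    have hkey' : (a'/g') * b' = (c'/g') * d' := by
      apply Nat.eq_of_mul_eq_mul_left hgpos'
      calc g' * ((a'/g') * b') = (g' * (a'/g')) * b' := by ring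
        _ = a' * b' := by rw [hxa']
        _ = c' * d' := heq'
        _ = (g' * (c'/g')) * d' := by rw [hzc']
        _ = g' * ((c'/g') * d') := by ring
    have hxd : (a/g) ∣ d := hcop.dvd_of_dvd_mul_left ⟨b, hkey.symm⟩
    have hxd' : (a'/g') ∣ d' := hcop'.dvd_of_dvd_mul_left ⟨b', hkey'.symm⟩
    have hdt : (a/g) * (d / (a/g)) = d := Nat.mul_div_cancel' hxd
    have hdt' : (a'/g') * (d' / (a'/g')) = d' := Nat.mul_div_cancel' hxd'
    have hdd : d = d' := by rw [← hdt, ← hdt', hft, hfx]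
    have hbz : (c/g) * (d / (a/g)) = b := by
      apply Nat.eq_of_mul_eq_mul_left hxpos
      calc (a/g) * ((c/g) * (d/(a/g))) = (c/g) * ((a/g) * (d/(a/g))) := by ring
        _ = (c/g) * d := by rw [hdt]
        _ = (a/g) * b := hkey.symm
    have hbz' : (c'/g') * (d' / (a'/g')) = b' := by
      apply Nat.eq_of_mul_eq_mul_left hxpos'
      calc (a'/g') * ((c'/g') * (d'/(a'/g'))) = (c'/g') * ((a'/g') * (d'/(a'/g'))) := by ring
        _ = (c'/g') * d' := by rw [hdt']
        _ = (a'/g') * b' := hkey'.symm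
    have hbb : b = b' := by rw [← hbz, ← hbz', hft, hfz]
    simp [haa, hcc, hdd, hbb]

lemma s_card (T : ℕ) :
    (((Finset.Icc 1 T ×ˢ Finset.Icc 1 T).filter (fun w : ℕ × ℕ => w.1 * w.2 ≤ T)).card)
      ≤ ∑ x ∈ Finset.Icc 1 T, T / x := by
  rw [Finset.card_eq_sum_card_fiberwise (f := fun w : ℕ × ℕ => w.1) (t := Finset.Icc 1 T)
    (by
      intro w hw
      rw [Finset.mem_coe, Finset.mem_filter, Finset.mem_product] at hw
      exact hw.1.1)]
  apply Finset.sum_le_sum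
  intro x hx
  rw [Finset.mem_Icc] at hx
  have : (((Finset.Icc 1 T ×ˢ Finset.Icc 1 T).filter (fun w : ℕ × ℕ => w.1 * w.2 ≤ T)).filter
      (fun w => w.1 = x)).card ≤ (Finset.Icc 1 (T/x)).card := by
    apply Finset.card_le_card_of_injOn (fun w => w.2)
    · intro w hw
      rw [Finset.mem_coe, Finset.mem_filter, Finset.mem_filter, Finset.mem_product, Finset.mem_Icc,
        Finset.mem_Icc] at hw
      obtain ⟨⟨⟨_, h1⟩, h2⟩, h3⟩ := hw
      rw [Finset.mem_coe, Finset.mem_Icc]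
      refine ⟨h1.1, ?_⟩
      rw [Nat.le_div_iff_mul_le (by omega), Nat.mul_comm]
      rw [← h3]
      exact h2
    · rintro ⟨x1, y1⟩ h1 ⟨x2, y2⟩ h2 hf
      simp only [Finset.mem_coe, Finset.mem_filter] at h1 h2
      have e1 : x1 = x := h1.2
      have e2 : x2 = x := h2.2
      simp only at hf
      simp [e1, e2, hf]
  calc _ ≤ (Finset.Icc 1 (T/x)).card := this
    _ = T / x := by rw [Nat.card_Icc, Nat.add_sub_cancel]

lemma offdiag_card (T p' k : ℕ) (hkp : 1 ≤ k * p') :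
    ((((Finset.Icc 1 T ×ˢ Finset.Icc 1 T) ×ˢ (Finset.Icc 1 T ×ˢ Finset.Icc 1 T)).filter
      (fun y : (ℕ × ℕ) × ℕ × ℕ => y.1.1 * y.2.2 = y.2.1 * y.1.2 + k * p')).card : ℝ)
    ≤ 4 * (T:ℝ)^2 * (∑ d ∈ (k*p').divisors, (1:ℝ)/d) + (T:ℝ)^2 := by
  rw [card_F_eq]
  push_cast
  have step : ∀ ac ∈ Finset.Icc 1 T ×ˢ Finset.Icc 1 T,
      (((Finset.Icc 1 T ×ˢ Finset.Icc 1 T).filter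
        (fun bd : ℕ × ℕ => ac.1 * bd.1 = ac.2 * bd.2 + k*p')).card : ℝ)
      ≤ (if Nat.gcd ac.1 ac.2 ∣ k*p'
          then (Nat.gcd ac.1 ac.2 : ℝ) * T / Real.sqrt (ac.1*ac.2) else 0) + 1 := by
    rintro ⟨a, c⟩ hac
    rw [Finset.mem_product, Finset.mem_Icc, Finset.mem_Icc] at hac
    by_cases hgd : Nat.gcd a c ∣ k*p'
    · rw [if_pos hgd]
      exact count_lin T a c (k*p') hac.1.1 hac.2.1
    · rw [if_neg hgd, count_lin_zero T a c (k*p') hgd]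
      norm_num
  calc ∑ ac ∈ Finset.Icc 1 T ×ˢ Finset.Icc 1 T,
        ((((Finset.Icc 1 T ×ˢ Finset.Icc 1 T).filter
          (fun bd : ℕ × ℕ => ac.1 * bd.1 = ac.2 * bd.2 + k*p')).card : ℕ) : ℝ)
      ≤ ∑ ac ∈ Finset.Icc 1 T ×ˢ Finset.Icc 1 T,
        ((if Nat.gcd ac.1 ac.2 ∣ k*p'
          then (Nat.gcd ac.1 ac.2 : ℝ) * T / Real.sqrt (ac.1*ac.2) else 0) + 1) :=
        Finset.sum_le_sum step
    _ = (∑ ac ∈ Finset.Icc 1 T ×ˢ Finset.Icc 1 T,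
          (if Nat.gcd ac.1 ac.2 ∣ k*p'
            then (Nat.gcd ac.1 ac.2 : ℝ) * T / Real.sqrt (ac.1*ac.2) else 0)) + (T:ℝ)^2 := by
        rw [Finset.sum_add_distrib, Finset.sum_const, Finset.card_product, Nat.card_Icc]
        simp [sq]
    _ ≤ 4 * (T:ℝ)^2 * (∑ d ∈ (k*p').divisors, (1:ℝ)/d) + (T:ℝ)^2 := by
        have := sumA T (k*p') hkp
        linarith

lemma log_est1 (T : ℕ) (hT : 2 ≤ T) : (1 + Real.log T)^2 ≤ 4*T := by
  have hT1 : (1:ℝ) ≤ T := by exact_mod_cast (by omega : 1 ≤ T)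
  have hs : (0:ℝ) < Real.sqrt T := Real.sqrt_pos.2 (by linarith)
  have hlog : Real.log T = 2 * Real.log (Real.sqrt T) := by
    rw [Real.log_sqrt (by linarith)]; ring
  have h2 : Real.log (Real.sqrt T) ≤ Real.sqrt T - 1 := Real.log_le_sub_one_of_pos hs
  have h3 : 1 + Real.log T ≤ 2*Real.sqrt T - 1 := by rw [hlog]; linarith
  have h4 : 0 ≤ 1 + Real.log T := by
    have := Real.log_nonneg hT1; linarith
  have h5 : (Real.sqrt T)^2 = (T:ℝ) := Real.sq_sqrt (by linarith)
  have h6 : 1 ≤ Real.sqrt T := by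
    rw [show (1:ℝ) = Real.sqrt 1 by simp]
    exact Real.sqrt_le_sqrt hT1
  nlinarith

lemma log_est2 (T p : ℕ) (hT : 2 ≤ T) (hTp : T < p) :
    (1 + Real.log T)^2 ≤ 4*(Real.log p)^2 := by
  have h3 : (3:ℝ) ≤ p := by exact_mod_cast (by omega : 3 ≤ p)
  have hp0 : (0:ℝ) < p := by linarith
  have h1 : 1 ≤ Real.log p := by
    rw [Real.le_log_iff_exp_le hp0]
    calc Real.exp 1 ≤ 2.7182818286 := Real.exp_one_lt_d9.le
      _ ≤ 3 := by norm_num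
      _ ≤ p := h3
  have hTle : Real.log T ≤ Real.log p := by
    apply Real.log_le_log (by positivity)
    exact_mod_cast hTp.le
  have h0 : 0 ≤ Real.log T := Real.log_nonneg (by exact_mod_cast (by omega : 1 ≤ T))
  nlinarith

lemma final_numeric (p T : ℕ) (hp : p.Prime) (hT : 2 ≤ T) :
    2 * (T:ℝ)^2 * (1 + Real.log T)^2 + 34 * ((T:ℝ)^4/p)
      ≤ 50 * ((T:ℝ)^4/p + (T:ℝ)^2 * Real.log p^2) := by
  have hppos : 0 < p := hp.pos
  have hpR : (0:ℝ) < p := by exact_mod_cast hppos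
  rcases le_or_gt p T with hpt | htp
  · have h1 : (1 + Real.log T)^2 ≤ 4*T := log_est1 T hT
    have h2 : (T:ℝ)^3 ≤ (T:ℝ)^4/p := by
      rw [le_div_iff₀ hpR]
      have hple : (p:ℝ) ≤ T := by exact_mod_cast hpt
      have hT3 : (0:ℝ) ≤ (T:ℝ)^3 := by positivity
      nlinarith [mul_le_mul_of_nonneg_left hple hT3]
    have h3 : 2 * (T:ℝ)^2 * (1 + Real.log T)^2 ≤ 8 * (T:ℝ)^3 := by
      have := mul_le_mul_of_nonneg_left h1 (by positivity : (0:ℝ) ≤ 2*(T:ℝ)^2)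
      nlinarith
    have h4 : (0:ℝ) ≤ (T:ℝ)^2 * Real.log p^2 := by positivity
    have h5 : (0:ℝ) ≤ (T:ℝ)^3 := by positivity
    linarith
  · have h1 : (1 + Real.log T)^2 ≤ 4*(Real.log p)^2 := log_est2 T p hT htp
    have h3 : 2 * (T:ℝ)^2 * (1 + Real.log T)^2 ≤ 8 * (T:ℝ)^2 * (Real.log p)^2 := by
      have := mul_le_mul_of_nonneg_left h1 (by positivity : (0:ℝ) ≤ 2*(T:ℝ)^2)
      nlinarith
    have h4 : (0:ℝ) ≤ (T:ℝ)^4/p := by positivity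
    have h5 : (0:ℝ) ≤ (T:ℝ)^2 * Real.log p^2 := by positivity
    linarith

open Finset in
theorem congruence_solution_count :
    ∃ C > (0:ℝ), ∀ (m p T : ℕ), 2 ≤ m → p.Prime → 2 ≤ T →
      ((((Finset.Icc 1 T ×ˢ Finset.Icc 1 T) ×ˢ (Finset.Icc 1 T ×ˢ Finset.Icc 1 T)).filter
          (fun y : (ℕ × ℕ) × ℕ × ℕ =>
            ¬ p ∣ y.1.1 * y.1.2 * y.2.1 * y.2.2 ∧
              (y.1.1 * y.2.2) % p = (y.2.1 * y.1.2) % p)).card : ℝ)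
        ≤ C * ((T : ℝ) ^ 4 / p + (T : ℝ) ^ 2 * Real.log p ^ 2) := by
  refine ⟨50, by norm_num, ?_⟩
  intro m p T hm hp hT
  have hppos : 0 < p := hp.pos
  set B4 := (Finset.Icc 1 T ×ˢ Finset.Icc 1 T) ×ˢ (Finset.Icc 1 T ×ˢ Finset.Icc 1 T) with hB4
  obtain ⟨K, hK⟩ : ∃ K, K = (T*T - 1)/p := ⟨_, rfl⟩
  set F : ℕ → Finset ((ℕ×ℕ)×ℕ×ℕ) :=
    fun k => B4.filter (fun y => y.1.1*y.2.2 = y.2.1*y.1.2 + k*p) with hF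
  set F' : ℕ → Finset ((ℕ×ℕ)×ℕ×ℕ) :=
    fun k => B4.filter (fun y => y.2.1*y.1.2 = y.1.1*y.2.2 + k*p) with hF'
  -- subset step
  have hsub : B4.filter (fun y : (ℕ × ℕ) × ℕ × ℕ =>
      ¬ p ∣ y.1.1 * y.1.2 * y.2.1 * y.2.2 ∧
        (y.1.1 * y.2.2) % p = (y.2.1 * y.1.2) % p)
      ⊆ (Finset.Icc 0 K).biUnion F ∪ (Finset.Icc 0 K).biUnion F' := by
    intro y hy
    rw [Finset.mem_filter] at hy
    obtain ⟨hyB, _, hmod⟩ := hy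
    have hbnd : 1 ≤ y.1.1 * y.2.2 ∧ y.1.1 * y.2.2 ≤ T*T
        ∧ 1 ≤ y.2.1 * y.1.2 ∧ y.2.1 * y.1.2 ≤ T*T := by
      simp only [hB4, Finset.mem_product, Finset.mem_Icc] at hyB
      obtain ⟨⟨⟨h1, h2⟩, h3, h4⟩, ⟨h5, h6⟩, h7, h8⟩ := hyB
      exact ⟨Nat.mul_le_mul h1 h7, Nat.mul_le_mul h2 h8,
        Nat.mul_le_mul h5 h3, Nat.mul_le_mul h6 h4⟩
    rcases le_total (y.2.1 * y.1.2) (y.1.1 * y.2.2) with hle | hle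
    · have hdvd : p ∣ y.1.1 * y.2.2 - y.2.1 * y.1.2 :=
        (Nat.modEq_iff_dvd' hle).1 (hmod.symm : Nat.ModEq p (y.2.1 * y.1.2) (y.1.1 * y.2.2))
      obtain ⟨k, hk⟩ := hdvd
      have hcomm : k * p = p * k := Nat.mul_comm k p
      apply Finset.mem_union_left
      rw [Finset.mem_biUnion]
      refine ⟨k, ?_, ?_⟩
      · rw [Finset.mem_Icc]
        refine ⟨Nat.zero_le _, ?_⟩
        rw [hK, Nat.le_div_iff_mul_le hppos]
        omega
      · rw [hF, Finset.mem_filter]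
        exact ⟨hyB, by omega⟩
    · have hdvd : p ∣ y.2.1 * y.1.2 - y.1.1 * y.2.2 :=
        (Nat.modEq_iff_dvd' hle).1 (hmod : Nat.ModEq p (y.1.1 * y.2.2) (y.2.1 * y.1.2))
      obtain ⟨k, hk⟩ := hdvd
      have hcomm : k * p = p * k := Nat.mul_comm k p
      apply Finset.mem_union_right
      rw [Finset.mem_biUnion]
      refine ⟨k, ?_, ?_⟩
      · rw [Finset.mem_Icc]
        refine ⟨Nat.zero_le _, ?_⟩
        rw [hK, Nat.le_div_iff_mul_le hppos]
        omega
      · rw [hF', Finset.mem_filter]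
        exact ⟨hyB, by omega⟩
  have hFF' : ∀ k, (F' k).card = (F k).card := by
    intro k
    apply Finset.card_bij' (fun y _ => Prod.swap y) (fun y _ => Prod.swap y)
    · rintro ⟨⟨u1, v1⟩, u2, v2⟩ hy
      rw [hF', Finset.mem_filter] at hy
      rw [hF, Finset.mem_filter]
      constructor
      · simp only [hB4, Finset.mem_product] at hy ⊢
        exact ⟨hy.1.2, hy.1.1⟩
      · exact hy.2
    · rintro ⟨⟨u1, v1⟩, u2, v2⟩ hy
      rw [hF, Finset.mem_filter] at hy
      rw [hF', Finset.mem_filter]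
      constructor
      · simp only [hB4, Finset.mem_product] at hy ⊢
        exact ⟨hy.1.2, hy.1.1⟩
      · exact hy.2
    · intros y _; rfl
    · intros y _; rfl
  have hcard1 : (B4.filter (fun y : (ℕ × ℕ) × ℕ × ℕ =>
      ¬ p ∣ y.1.1 * y.1.2 * y.2.1 * y.2.2 ∧
        (y.1.1 * y.2.2) % p = (y.2.1 * y.1.2) % p)).card
      ≤ 2 * ((F 0).card + ∑ k ∈ Finset.Icc 1 K, (F k).card) := by
    have h1 := Finset.card_le_card hsub
    have h2 := Finset.card_union_le ((Finset.Icc 0 K).biUnion F) ((Finset.Icc 0 K).biUnion F')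
    have h3 := Finset.card_biUnion_le (s := Finset.Icc 0 K) (t := F)
    have h4 := Finset.card_biUnion_le (s := Finset.Icc 0 K) (t := F')
    have h5 : ∑ k ∈ Finset.Icc 0 K, (F' k).card = ∑ k ∈ Finset.Icc 0 K, (F k).card :=
      Finset.sum_congr rfl (fun k _ => hFF' k)
    have h6 : ∑ k ∈ Finset.Icc 0 K, (F k).card
        = (F 0).card + ∑ k ∈ Finset.Icc 1 K, (F k).card := by
      rw [show Finset.Icc 0 K = insert 0 (Finset.Icc 1 K) from by
        ext x; simp [Finset.mem_Icc, Finset.mem_insert]; omega]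
      rw [Finset.sum_insert (by simp [Finset.mem_Icc])]
    calc (B4.filter (fun y : (ℕ × ℕ) × ℕ × ℕ =>
          ¬ p ∣ y.1.1 * y.1.2 * y.2.1 * y.2.2 ∧
            (y.1.1 * y.2.2) % p = (y.2.1 * y.1.2) % p)).card
        ≤ ((Finset.Icc 0 K).biUnion F ∪ (Finset.Icc 0 K).biUnion F').card := h1
      _ ≤ ((Finset.Icc 0 K).biUnion F).card + ((Finset.Icc 0 K).biUnion F').card := h2
      _ ≤ (∑ k ∈ Finset.Icc 0 K, (F k).card) + (∑ k ∈ Finset.Icc 0 K, (F' k).card) :=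
          Nat.add_le_add h3 h4
      _ = (∑ k ∈ Finset.Icc 0 K, (F k).card) + (∑ k ∈ Finset.Icc 0 K, (F k).card) := by rw [h5]
      _ = 2 * (∑ k ∈ Finset.Icc 0 K, (F k).card) := (Nat.two_mul _).symm
      _ = 2 * ((F 0).card + ∑ k ∈ Finset.Icc 1 K, (F k).card) := by rw [h6]
  -- cast to ℝ
  have hcardR : ((B4.filter (fun y : (ℕ × ℕ) × ℕ × ℕ =>
      ¬ p ∣ y.1.1 * y.1.2 * y.2.1 * y.2.2 ∧
        (y.1.1 * y.2.2) % p = (y.2.1 * y.1.2) % p)).card : ℝ)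
      ≤ 2 * (((F 0).card : ℝ) + ∑ k ∈ Finset.Icc 1 K, ((F k).card : ℝ)) := by
    have := hcard1
    push_cast
    exact_mod_cast this
  -- diagonal bound
  have hdiagR : ((F 0).card : ℝ) ≤ ((T:ℝ)*(1 + Real.log T))^2 := by
    have h0 : F 0 = B4.filter (fun y : (ℕ×ℕ)×ℕ×ℕ => y.1.1*y.2.2 = y.2.1*y.1.2) := by
      rw [hF]
      apply Finset.filter_congr
      intros x _
      simp
    have h1 : (F 0).card ≤ (∑ x ∈ Finset.Icc 1 T, T/x)^2 := by
      rw [h0]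
      exact le_trans (diag_card T) (Nat.pow_le_pow_left (s_card T) 2)
    have h2 : ((∑ x ∈ Finset.Icc 1 T, T/x : ℕ) : ℝ) ≤ (T:ℝ)*(1 + Real.log T) := by
      push_cast
      calc ∑ x ∈ Finset.Icc 1 T, ((T/x : ℕ) : ℝ)
          ≤ ∑ x ∈ Finset.Icc 1 T, (T:ℝ)/x := Finset.sum_le_sum (fun x _ => Nat.cast_div_le)
        _ = (T:ℝ) * ∑ x ∈ Finset.Icc 1 T, (1:ℝ)/x := by
            rw [Finset.mul_sum]
            apply Finset.sum_congr rfl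
            intros; ring
        _ ≤ (T:ℝ) * (1 + Real.log T) :=
            mul_le_mul_of_nonneg_left (sum_inv_le_log T) (by positivity)
    calc ((F 0).card : ℝ) ≤ (((∑ x ∈ Finset.Icc 1 T, T/x)^2 : ℕ) : ℝ) := by exact_mod_cast h1
      _ = ((∑ x ∈ Finset.Icc 1 T, T/x : ℕ) : ℝ)^2 := by push_cast; ring
      _ ≤ ((T:ℝ)*(1 + Real.log T))^2 := by
          apply pow_le_pow_left₀ (by positivity) h2
  -- off-diagonal bound
  have hoffR : ∑ k ∈ Finset.Icc 1 K, ((F k).card : ℝ) ≤ 17 * K * (T:ℝ)^2 := by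
    calc ∑ k ∈ Finset.Icc 1 K, ((F k).card : ℝ)
        ≤ ∑ k ∈ Finset.Icc 1 K, (4 * (T:ℝ)^2 * (∑ d ∈ (k*p).divisors, (1:ℝ)/d) + (T:ℝ)^2) := by
          apply Finset.sum_le_sum
          intro k hk
          rw [Finset.mem_Icc] at hk
          have : 1 ≤ k * p := Nat.mul_pos (by omega) hppos
          exact offdiag_card T p k this
      _ = 4 * (T:ℝ)^2 * (∑ k ∈ Finset.Icc 1 K, ∑ d ∈ (k*p).divisors, (1:ℝ)/d)
            + (K:ℝ) * (T:ℝ)^2 := by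
          rw [Finset.sum_add_distrib, Finset.sum_const, ← Finset.mul_sum, Nat.card_Icc]
          simp [nsmul_eq_mul]
      _ ≤ 4 * (T:ℝ)^2 * (2 * ∑ k ∈ Finset.Icc 1 K, ∑ e ∈ k.divisors, (1:ℝ)/e)
            + (K:ℝ) * (T:ℝ)^2 := by
          have hst : ∑ k ∈ Finset.Icc 1 K, ∑ d ∈ (k*p).divisors, (1:ℝ)/d
              ≤ 2 * ∑ k ∈ Finset.Icc 1 K, ∑ e ∈ k.divisors, (1:ℝ)/e := by
            rw [Finset.mul_sum]
            apply Finset.sum_le_sum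
            intro k hk
            rw [Finset.mem_Icc] at hk
            exact sumB p k hp hk.1
          have h4T : (0:ℝ) ≤ 4 * (T:ℝ)^2 := by positivity
          nlinarith [mul_le_mul_of_nonneg_left hst h4T]
      _ ≤ 4 * (T:ℝ)^2 * (2 * (2 * K)) + (K:ℝ) * (T:ℝ)^2 := by
          have := sumC K
          have h4T : (0:ℝ) ≤ 4 * (T:ℝ)^2 * 2 := by positivity
          nlinarith [mul_le_mul_of_nonneg_left (sumC K) h4T]
      _ = 17 * K * (T:ℝ)^2 := by ring
  -- K bound
  have hKR : (K:ℝ) ≤ (T:ℝ)^2/p := by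
    have h1 : ((K:ℕ):ℝ) ≤ ((T*T-1 : ℕ):ℝ)/(p:ℝ) := by
      rw [hK]; exact Nat.cast_div_le
    have h2 : ((T*T-1 : ℕ):ℝ) ≤ (T:ℝ)^2 := by
      have : (T*T-1 : ℕ) ≤ T*T := Nat.sub_le _ _
      calc ((T*T-1 : ℕ):ℝ) ≤ ((T*T : ℕ):ℝ) := by exact_mod_cast this
        _ = (T:ℝ)^2 := by push_cast; ring
    have hpR : (0:ℝ) < p := by exact_mod_cast hppos
    calc (K:ℝ) ≤ ((T*T-1 : ℕ):ℝ)/(p:ℝ) := h1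
      _ ≤ (T:ℝ)^2/p := by gcongr
  -- final numeric
  have hTR : (2:ℝ) ≤ T := by exact_mod_cast hT
  have hpR : (0:ℝ) < p := by exact_mod_cast hppos
  have hLp : (0:ℝ) ≤ Real.log p := Real.log_nonneg (by exact_mod_cast hp.one_lt.le)
  have hmain : ((B4.filter (fun y : (ℕ × ℕ) × ℕ × ℕ =>
      ¬ p ∣ y.1.1 * y.1.2 * y.2.1 * y.2.2 ∧
        (y.1.1 * y.2.2) % p = (y.2.1 * y.1.2) % p)).card : ℝ)
      ≤ 2 * (T:ℝ)^2 * (1 + Real.log T)^2 + 34 * ((T:ℝ)^2/p) * (T:ℝ)^2 := by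
    have hKT : 17 * (K:ℝ) * (T:ℝ)^2 ≤ 17 * ((T:ℝ)^2/p) * (T:ℝ)^2 := by
      have hT2 : (0:ℝ) ≤ (T:ℝ)^2 := by positivity
      nlinarith
    calc _ ≤ 2 * (((F 0).card : ℝ) + ∑ k ∈ Finset.Icc 1 K, ((F k).card : ℝ)) := hcardR
      _ ≤ 2 * (((T:ℝ)*(1 + Real.log T))^2 + 17 * ((T:ℝ)^2/p) * (T:ℝ)^2) := by
          have := hoffR.trans hKT
          linarith [hdiagR]
      _ = 2 * (T:ℝ)^2 * (1 + Real.log T)^2 + 34 * ((T:ℝ)^2/p) * (T:ℝ)^2 := by ring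
  refine hmain.trans ?_
  have hT4 : 34 * ((T:ℝ)^2/p) * (T:ℝ)^2 = 34 * ((T:ℝ)^4/p) := by field_simp
  rw [hT4]
  exact final_numeric p T hp hT
end

section
/- Let V ≤ W and U be positive integers, m ≥ 2 an integer, and for each v ∈ [V, W] with gcd(v, m) = 1 let L_v, U_v be integers with 0 ≤ L_v < U_v ≤ U. Then for any integer a with m ∤ a, |Σ_{v=V, gcd(v,m)=1}^{W} Σ_{u=L_v+1}^{U_v} e_m(a·u·v⁻¹)| ≤ (U + W)·(Wm)^{o(1)}, where v⁻¹ is the inverse of v modulo m and e_m(z) = exp(2πiz/m). -/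
open Finset Real Complex

-- k+1 ≤ C0 * 2^(εk)
lemma aux_pow_bound {ε : ℝ} (hε : 0 < ε) (k : ℕ) :
    (k + 1 : ℝ) ≤ (1 + 8 / (ε * Real.log 2)^2) * (2:ℝ) ^ (ε * k) := by
  have hl2 : 0 < Real.log 2 := Real.log_pos (by norm_num)
  have hy : 0 ≤ ε * k * Real.log 2 := by positivity
  have h1 : Real.exp (ε * k * Real.log 2) ≥ (ε * k * Real.log 2)^2 / 4 := by
    have h2 : 1 + (ε * k * Real.log 2) / 2 ≤ Real.exp ((ε * k * Real.log 2)/2) := by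
      have := Real.add_one_le_exp ((ε * k * Real.log 2)/2)
      linarith
    have h3 : (1 + (ε * k * Real.log 2) / 2)^2 ≤ Real.exp ((ε * k * Real.log 2)/2)^2 :=
      pow_le_pow_left₀ (by positivity) h2 2
    rw [← Real.exp_nat_mul, show (2:ℕ) * (ε * ↑k * Real.log 2 / 2) = ε * ↑k * Real.log 2 by push_cast; ring] at h3
    nlinarith [h3, hy]
  have h2 : (2:ℝ) ^ (ε * k) = Real.exp (ε * k * Real.log 2) := by
    rw [Real.rpow_def_of_pos (by norm_num)]
    ring_nf
  rw [h2]
  rcases Nat.eq_zero_or_pos k with rfl | hk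
  · have h0 : ε * ((0:ℕ):ℝ) * Real.log 2 = 0 := by norm_num
    rw [h0, Real.exp_zero]
    have : (0:ℝ) < 8 / (ε * Real.log 2)^2 := by positivity
    push_cast
    linarith
  · have hk1 : (1:ℝ) ≤ k := by exact_mod_cast hk
    have hC : (8 / (ε * Real.log 2)^2) * ((ε * k * Real.log 2)^2/4) = 2 * k^2 := by
      field_simp
      ring
    nlinarith [Real.exp_pos (ε * k * Real.log 2), sq_nonneg (ε * Real.log 2), h1,
      mul_le_mul_of_nonneg_left h1 (le_of_lt (by positivity : (0:ℝ) < 8 / (ε * Real.log 2)^2))]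

lemma divisor_bound : ∀ ε : ℝ, 0 < ε → ∃ C : ℝ, 0 < C ∧ ∀ n : ℕ, 1 ≤ n →
    (n.divisors.card : ℝ) ≤ C * (n:ℝ) ^ ε := by
  intro ε hε
  set C0 : ℝ := 1 + 8 / (ε * Real.log 2)^2 with hC0def
  have hl2 : 0 < Real.log 2 := Real.log_pos (by norm_num)
  have hC0 : 1 ≤ C0 := by
    rw [hC0def]
    have : (0:ℝ) < 8 / (ε * Real.log 2)^2 := by positivity
    linarith
  -- threshold
  obtain ⟨P0, hP0⟩ := exists_nat_gt ((2:ℝ) ^ (1/ε))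
  refine ⟨C0 ^ (P0+1), by positivity, ?_⟩
  intro n hn
  have hn0 : n ≠ 0 := by omega
  rw [Nat.card_divisors hn0]
  -- pointwise bound
  have key : ∀ p ∈ n.primeFactors,
      ((n.factorization p + 1 : ℕ) : ℝ) ≤
        (if (p:ℝ) < (2:ℝ)^(1/ε) then C0 else 1) * ((p:ℝ) ^ (n.factorization p : ℕ)) ^ ε := by
    intro p hp
    have hpp : p.Prime := Nat.prime_of_mem_primeFactors hp
    have hp2 : (2:ℝ) ≤ p := by exact_mod_cast hpp.two_le
    have hrw : ((p:ℝ) ^ (n.factorization p : ℕ)) ^ ε = (p:ℝ) ^ (ε * (n.factorization p : ℕ)) := by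
      rw [← Real.rpow_natCast (p:ℝ) (n.factorization p), ← Real.rpow_mul (by positivity)]
      ring_nf
    rw [hrw]
    set k := n.factorization p with hk
    split_ifs with hsmall
    · calc ((k + 1 : ℕ) : ℝ) ≤ C0 * (2:ℝ) ^ (ε * k) := by push_cast; exact aux_pow_bound hε k
        _ ≤ C0 * (p:ℝ) ^ (ε * k) := by
            apply mul_le_mul_of_nonneg_left _ (by linarith)
            exact Real.rpow_le_rpow (by norm_num) hp2 (by positivity)
    · -- p ≥ 2^(1/ε) : k+1 ≤ 2^k ≤ (p^ε)^k = p^(εk)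
      have h2p : (2:ℝ) ≤ (p:ℝ) ^ ε := by
        have := Real.rpow_le_rpow (by positivity : (0:ℝ) ≤ (2:ℝ)^(1/ε)) (not_lt.mp hsmall) (le_of_lt hε)
        rwa [← Real.rpow_mul (by norm_num), one_div_mul_cancel (ne_of_gt hε), Real.rpow_one] at this
      have h1 : ((k + 1 : ℕ) : ℝ) ≤ (2:ℝ)^(k:ℕ) := by
        exact_mod_cast Nat.succ_le_of_lt (Nat.lt_two_pow_self)
      calc ((k + 1 : ℕ) : ℝ) ≤ (2:ℝ)^(k:ℕ) := h1
        _ ≤ ((p:ℝ) ^ ε)^(k:ℕ) := pow_le_pow_left₀ (by norm_num) h2p k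
        _ = (p:ℝ) ^ (ε * k) := by
            rw [← Real.rpow_natCast ((p:ℝ)^ε) k, ← Real.rpow_mul (by positivity)]
        _ = 1 * (p:ℝ) ^ (ε * k) := (one_mul _).symm
  push_cast
  calc (∏ p ∈ n.primeFactors, ((n.factorization p : ℝ) + 1))
      ≤ ∏ p ∈ n.primeFactors,
          (if (p:ℝ) < (2:ℝ)^(1/ε) then C0 else 1) * ((p:ℝ) ^ (n.factorization p : ℕ)) ^ ε := by
        refine Finset.prod_le_prod (fun p _ => by positivity) (fun p hp => ?_)
        have := key p hp
        push_cast at this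
        exact this
    _ = (∏ p ∈ n.primeFactors, (if (p:ℝ) < (2:ℝ)^(1/ε) then C0 else 1)) *
          ∏ p ∈ n.primeFactors, ((p:ℝ) ^ (n.factorization p : ℕ)) ^ ε := Finset.prod_mul_distrib
    _ ≤ C0 ^ (P0+1) * (n:ℝ) ^ ε := by
        have hprod : (∏ p ∈ n.primeFactors, ((p:ℝ) ^ (n.factorization p : ℕ)) ^ ε)
            = (n:ℝ) ^ ε := by
          rw [Real.finset_prod_rpow _ _ (fun i _ => by positivity) ε]
          congr 1
          have h5 : ∏ p ∈ n.primeFactors, p ^ n.factorization p = n := by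
            rw [Nat.prod_factorization_eq_prod_primeFactors (fun p k => p ^ k) |>.symm]
            exact Nat.factorization_prod_pow_eq_self hn0
          exact_mod_cast congrArg (Nat.cast : ℕ → ℝ) h5
        rw [hprod]
        apply mul_le_mul_of_nonneg_right _ (by positivity)
        rw [Finset.prod_ite, Finset.prod_const, Finset.prod_const, one_pow, mul_one]
        apply pow_le_pow_right₀ hC0
        have hsub : (n.primeFactors.filter (fun p : ℕ => (p:ℝ) < (2:ℝ)^(1/ε))) ⊆
            Finset.range (P0+1) := by
          intro p hp
          rw [Finset.mem_filter] at hp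
          rw [Finset.mem_range]
          have h6 : (p:ℝ) < P0 := lt_trans hp.2 hP0
          have h7 : p < P0 := by exact_mod_cast h6
          omega
        calc (n.primeFactors.filter (fun p : ℕ => (p:ℝ) < (2:ℝ)^(1/ε))).card
            ≤ (Finset.range (P0+1)).card := Finset.card_le_card hsub
          _ = P0 + 1 := Finset.card_range _

lemma norm_exp_two_pi_sub_one (m b : ℕ) (hm : 2 ≤ m) (hb1 : 1 ≤ b) (hb2 : b < m) :
    ‖Complex.exp (2 * Real.pi * Complex.I * (((b:ℝ)/m : ℝ) : ℂ)) - 1‖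
      = 2 * Real.sin (Real.pi * b / m) := by
  set θ : ℝ := Real.pi * b / m with hθ
  have hrw : (2 * Real.pi * Complex.I * (((b:ℝ)/m : ℝ) : ℂ)) = ((2*θ : ℝ) : ℂ) * Complex.I := by
    rw [hθ]
    push_cast
    have : (m:ℂ) ≠ 0 := by exact_mod_cast (by positivity : (m:ℝ) ≠ 0)
    field_simp
  rw [hrw]
  have e1 : Complex.exp (((2*θ:ℝ):ℂ)*Complex.I)
      = Complex.exp ((θ:ℂ)*Complex.I) * Complex.exp ((θ:ℂ)*Complex.I) := by
    rw [← Complex.exp_add]; push_cast; ring_nf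
  have e2 : Complex.exp ((θ:ℂ)*Complex.I) * Complex.exp (-(θ:ℂ)*Complex.I) = 1 := by
    rw [← Complex.exp_add]
    norm_num
  have hI : (Complex.I)^2 = -1 := Complex.I_sq
  have key : Complex.exp (((2*θ:ℝ):ℂ)*Complex.I) - 1
      = Complex.exp ((θ:ℂ)*Complex.I) * (2 * Complex.I * Complex.sin (θ:ℂ)) := by
    rw [Complex.sin, e1]
    linear_combination e2 + (-(Complex.exp ((θ:ℂ)*Complex.I))
      * (Complex.exp (-(θ:ℂ)*Complex.I) - Complex.exp ((θ:ℂ)*Complex.I))) * hI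
  rw [key]
  rw [norm_mul]
  have h3 : ‖Complex.exp ((θ:ℂ)*Complex.I)‖ = 1 := by
    exact Complex.norm_exp_ofReal_mul_I θ
  rw [h3, one_mul, ← Complex.ofReal_sin]
  rw [norm_mul, norm_mul]
  simp only [Complex.norm_two, Complex.norm_I, Complex.norm_real, Real.norm_eq_abs]
  have hsin : 0 ≤ Real.sin θ := by
    apply Real.sin_nonneg_of_nonneg_of_le_pi
    · rw [hθ]; positivity
    · rw [hθ]
      rw [div_le_iff₀ (by positivity : (0:ℝ) < m)]
      have : (b:ℝ) ≤ m := by exact_mod_cast hb2.le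
      nlinarith [Real.pi_pos]
  rw [_root_.abs_of_nonneg hsin]
  ring

lemma sin_lower (m b : ℕ) (hm : 2 ≤ m) (hb1 : 1 ≤ b) (hb2 : b < m) :
    2 * ((min b (m - b) : ℕ) : ℝ) / m ≤ Real.sin (Real.pi * b / m) := by
  have hm0 : (0:ℝ) < m := by positivity
  have hbm : (b:ℝ) < m := by exact_mod_cast hb2
  rcases le_or_gt (2*b) m with h | h
  · -- b/m ≤ 1/2
    have hmin : ((min b (m-b) : ℕ) : ℝ) ≤ b := by
      have : min b (m-b) ≤ b := min_le_left _ _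
      exact_mod_cast this
    have := Real.mul_le_sin (x := Real.pi * b / m) (by positivity)
      (by
        rw [div_le_div_iff₀ hm0 (by norm_num : (0:ℝ) < 2)]
        have h2 : (2*b : ℝ) ≤ m := by exact_mod_cast h
        nlinarith [Real.pi_pos])
    calc 2 * ((min b (m-b) : ℕ) : ℝ) / m ≤ 2 * (b:ℝ) / m := by
          gcongr
      _ ≤ Real.sin (Real.pi * b / m) := by
          have hπ : (0:ℝ) < Real.pi := Real.pi_pos
          calc 2 * (b:ℝ)/m = 2 / Real.pi * (Real.pi * b / m) := by field_simp
            _ ≤ Real.sin (Real.pi * b / m) := this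
  · -- b/m > 1/2, use sin(πx) = sin(π(1-x))
    have hx : Real.pi * b / m = Real.pi - Real.pi * (m-b : ℕ) / m := by
      have : ((m - b : ℕ) : ℝ) = (m:ℝ) - b := by
        push_cast [Nat.cast_sub hb2.le]; ring
      rw [this]
      field_simp
      ring
    rw [hx, Real.sin_pi_sub]
    have hmin : ((min b (m-b) : ℕ) : ℝ) ≤ ((m-b : ℕ):ℝ) := by
      exact_mod_cast min_le_right b (m-b)
    have hmb : ((m - b : ℕ) : ℝ) = (m:ℝ) - b := by
      push_cast [Nat.cast_sub hb2.le]; ring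
    have := Real.mul_le_sin (x := Real.pi * (m-b:ℕ) / m) (by positivity)
      (by
        rw [hmb, div_le_div_iff₀ hm0 (by norm_num : (0:ℝ) < 2)]
        have h2 : (m:ℝ) < 2*b := by exact_mod_cast h
        nlinarith [Real.pi_pos])
    calc 2 * ((min b (m-b) : ℕ) : ℝ) / m ≤ 2 * ((m-b:ℕ):ℝ) / m := by
          gcongr
      _ = 2 / Real.pi * (Real.pi * (m-b:ℕ) / m) := by field_simp
      _ ≤ Real.sin (Real.pi * (m-b:ℕ) / m) := this

lemma norm_exp_real_one (r : ℝ) : ‖Complex.exp (2*Real.pi*Complex.I*((r:ℝ):ℂ))‖ = 1 := by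
  rw [show 2*(Real.pi:ℂ)*Complex.I*((r:ℝ):ℂ) = (((2*Real.pi*r : ℝ)):ℂ)*Complex.I by push_cast; ring]
  exact Complex.norm_exp_ofReal_mul_I _

lemma exp_congr_mod (m : ℕ) (hm : 1 ≤ m) (n n' : ℕ) (h : n % m = n' % m) :
    Complex.exp (2*Real.pi*Complex.I*(((n:ℝ)/m : ℝ):ℂ))
      = Complex.exp (2*Real.pi*Complex.I*(((n':ℝ)/m : ℝ):ℂ)) := by
  have hmz : (m:ℂ) ≠ 0 := by exact_mod_cast (by positivity : (m:ℝ) ≠ 0)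
  rw [Complex.exp_eq_exp_iff_exists_int]
  obtain ⟨k, hkint⟩ : ∃ k : ℤ, (n:ℤ) = (n':ℤ) + k*m := by
    refine ⟨((n:ℤ)/m - (n':ℤ)/m), ?_⟩
    have h1 := Int.mul_ediv_add_emod (n:ℤ) m
    have h2 := Int.mul_ediv_add_emod (n':ℤ) m
    have h3 : (n:ℤ) % m = (n':ℤ) % m := by omega
    nlinarith [h1, h2, h3]
  refine ⟨k, ?_⟩
  have hkc : (n:ℂ) = (n':ℂ) + (k:ℂ)*(m:ℂ) := by exact_mod_cast hkint
  push_cast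
  field_simp
  linear_combination hkc

lemma exp_pow (m : ℕ) (b u : ℕ) :
    Complex.exp (2*Real.pi*Complex.I*((((u*b : ℕ):ℝ)/m : ℝ):ℂ))
      = Complex.exp (2*Real.pi*Complex.I*(((b:ℝ)/m : ℝ):ℂ)) ^ u := by
  rw [← Complex.exp_nat_mul]
  congr 1
  push_cast
  ring

lemma geom_norm_bound (m b : ℕ) (hm : 2 ≤ m) (hb1 : 1 ≤ b) (hb2 : b < m) (A B : ℕ) :
    ‖∑ u ∈ Finset.Icc A B, Complex.exp (2*Real.pi*Complex.I*(((b:ℝ)/m : ℝ):ℂ)) ^ u‖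
      ≤ (m:ℝ) / ((min b (m-b) : ℕ):ℝ) := by
  set ζ := Complex.exp (2*Real.pi*Complex.I*(((b:ℝ)/m : ℝ):ℂ)) with hζ
  have hm0 : (0:ℝ) < m := by positivity
  have hβ1 : 1 ≤ min b (m-b) := by omega
  have hβ0 : (0:ℝ) < ((min b (m-b) : ℕ):ℝ) := by exact_mod_cast hβ1
  rcases le_or_gt A B with hAB | hAB
  swap
  · rw [Finset.Icc_eq_empty (by omega)]
    simp only [Finset.sum_empty, norm_zero]
    positivity
  have hζ1 : ζ ≠ 1 := by
    rw [hζ]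
    intro hcon
    rw [Complex.exp_eq_one_iff] at hcon
    obtain ⟨k, hk⟩ := hcon
    have hmz : (m:ℂ) ≠ 0 := by exact_mod_cast (by positivity : (m:ℝ) ≠ 0)
    have h2πI : (2*(Real.pi:ℂ)*Complex.I) ≠ 0 := by
      simp [Complex.I_ne_zero, Real.pi_ne_zero, Complex.ofReal_ne_zero]
    have hx : (((b:ℝ)/m : ℝ):ℂ) = (k:ℂ) := by
      apply mul_left_cancel₀ h2πI
      linear_combination hk
    have hxr : (b:ℝ)/m = (k:ℝ) := by exact_mod_cast hx
    have hlt : (b:ℝ)/m < 1 := by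
      rw [div_lt_one hm0]; exact_mod_cast hb2
    have hgt : 0 < (b:ℝ)/m := by positivity
    rw [hxr] at hlt hgt
    have : (0:ℤ) < k := by exact_mod_cast hgt
    have : k < 1 := by exact_mod_cast hlt
    omega
  rw [← Finset.Ico_add_one_right_eq_Icc, geom_sum_Ico hζ1 (by omega)]
  rw [norm_div]
  have hnum : ‖ζ ^ (B+1) - ζ ^ A‖ ≤ 2 := by
    calc ‖ζ ^ (B+1) - ζ ^ A‖ ≤ ‖ζ ^ (B+1)‖ + ‖ζ ^ A‖ := norm_sub_le _ _
      _ = 2 := by rw [norm_pow, norm_pow, hζ, norm_exp_real_one]; norm_num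
  have hden : 4 * ((min b (m-b):ℕ):ℝ) / m ≤ ‖ζ - 1‖ := by
    rw [hζ, norm_exp_two_pi_sub_one m b hm hb1 hb2]
    have := sin_lower m b hm hb1 hb2
    linarith [mul_le_mul_of_nonneg_left this (by norm_num : (0:ℝ) ≤ 2),
      (by field_simp; ring : 2 * (2 * ((min b (m-b):ℕ):ℝ) / m) = 4 * ((min b (m-b):ℕ):ℝ) / m)]
  have hden0 : (0:ℝ) < 4 * ((min b (m-b):ℕ):ℝ) / m := by positivity
  calc ‖ζ ^ (B+1) - ζ ^ A‖ / ‖ζ - 1‖ ≤ 2 / (4 * ((min b (m-b):ℕ):ℝ) / m) := by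
        apply div_le_div₀ (by norm_num) hnum hden0 hden
    _ = (m:ℝ) / (2 * ((min b (m-b):ℕ):ℝ)) := by field_simp; ring
    _ ≤ (m:ℝ) / ((min b (m-b):ℕ):ℝ) := by gcongr; linarith

lemma residue_count (m K : ℕ) (hm : 1 ≤ m) (r : ZMod m) :
    ((Finset.Icc 1 K).filter (fun N : ℕ => (N : ZMod m) = r)).card ≤ K/m + 1 := by
  haveI : NeZero m := ⟨by omega⟩
  have h := Finset.card_le_card_of_injOn (f := fun N => N / m)
    (s := (Finset.Icc 1 K).filter (fun N : ℕ => (N : ZMod m) = r))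
    (t := Finset.range (K/m + 1)) ?_ ?_
  · simpa using h
  · intro N hN
    simp only [Finset.mem_coe, Finset.mem_filter, Finset.mem_Icc] at hN
    rw [Finset.mem_coe, Finset.mem_range]
    have h5 : N / m ≤ K / m := Nat.div_le_div_right hN.1.2
    show N / m < K / m + 1
    omega
  · intro N₁ h₁ N₂ h₂ hdiv
    simp only [Finset.coe_filter, Set.mem_setOf_eq, Finset.mem_Icc] at h₁ h₂
    have e₁ : N₁ % m = r.val := by rw [← ZMod.val_natCast, h₁.2]
    have e₂ : N₂ % m = r.val := by rw [← ZMod.val_natCast, h₂.2]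
    have e₃ : N₁ % m = N₂ % m := e₁.trans e₂.symm
    have f₁ := Nat.div_add_mod N₁ m
    have f₂ := Nat.div_add_mod N₂ m
    have hdiv' : N₁ / m = N₂ / m := hdiv
    show N₁ = N₂
    rw [← f₁, ← f₂, hdiv', e₃]

set_option maxHeartbeats 1000000 in
open Finset in
theorem expsum_ratios_bound :
    ∀ ε > (0:ℝ), ∃ C > (0:ℝ), ∀ (m U V W : ℕ) (a : ℤ) (L Uv : ℕ → ℕ),
      2 ≤ m → 1 ≤ V → V ≤ W → 1 ≤ U → ¬ (m:ℤ) ∣ a →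
      (∀ v, L v < Uv v ∧ Uv v ≤ U) →
      ‖∑ v ∈ (Finset.Icc V W).filter (fun v => Nat.gcd v m = 1),
          ∑ u ∈ Finset.Icc (L v + 1) (Uv v),
            Complex.exp (2 * Real.pi * Complex.I *
              ((((a : ZMod m) * (u : ZMod m) * (v : ZMod m)⁻¹).val : ℝ) / m))‖
        ≤ C * ((U : ℝ) + W) * ((W * m : ℕ) : ℝ) ^ ε := by
  intro ε hε
  set δ : ℝ := min ε 1 / 2 with hδdef
  have hδ : 0 < δ := by rw [hδdef]; positivity
  have hδ1 : δ ≤ 1/2 := by rw [hδdef]; simp [min_le_right]; linarith [min_le_right ε 1]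
  obtain ⟨C₀, hC₀pos, hC₀⟩ := divisor_bound δ hδ
  have hl2 : 0 < Real.log 2 := Real.log_pos (by norm_num)
  set C : ℝ := 8 * C₀ * (1/(δ*Real.log 2) + 1) with hCdef
  have hCpos : 0 < C := by rw [hCdef]; positivity
  refine ⟨C, hCpos, ?_⟩
  intro m U V W a L Uv hm hV hVW hU ha hLU
  haveI : NeZero m := ⟨by omega⟩
  have hm0 : (0:ℝ) < m := by positivity
  have hW0 : (0:ℝ) < W := by exact_mod_cast lt_of_lt_of_le hV hVW
  set F := (Finset.Icc V W).filter (fun v => Nat.gcd v m = 1) with hF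
  set bf : ℕ → ℕ := fun v => ((a : ZMod m) * (v : ZMod m)⁻¹).val with hbf
  set βf : ℕ → ℕ := fun v => min (bf v) (m - bf v) with hβf
  -- b bounds
  have hbv : ∀ v ∈ F, 1 ≤ bf v ∧ bf v < m := by
    intro v hv
    rw [hF, Finset.mem_filter] at hv
    have hcop : Nat.Coprime v m := hv.2
    constructor
    · rcases Nat.eq_zero_or_pos (bf v) with h0 | h1
      · exfalso
        have hzero : (a : ZMod m) * (v : ZMod m)⁻¹ = 0 :=
          (ZMod.val_eq_zero _).mp h0
        have hva : (a : ZMod m) = 0 := by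
          have hinv : (v : ZMod m) * (v : ZMod m)⁻¹ = 1 := ZMod.coe_mul_inv_eq_one v hcop
          calc (a : ZMod m) = (a : ZMod m) * ((v : ZMod m) * (v : ZMod m)⁻¹) := by rw [hinv, mul_one]
            _ = ((a : ZMod m) * (v : ZMod m)⁻¹) * (v : ZMod m) := by ring
            _ = 0 := by rw [hzero, zero_mul]
        rw [ZMod.intCast_zmod_eq_zero_iff_dvd] at hva
        exact ha hva
      · exact h1
    · exact ZMod.val_lt _
  -- summand identity
  have hsummand : ∀ v ∈ F, ∀ u : ℕ,
      Complex.exp (2 * Real.pi * Complex.I *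
          ((((a : ZMod m) * (u : ZMod m) * (v : ZMod m)⁻¹).val : ℝ) / m))
        = Complex.exp (2*Real.pi*Complex.I*((((bf v):ℝ)/m : ℝ):ℂ)) ^ u := by
    intro v hv u
    have hmul : (a : ZMod m) * (u : ZMod m) * (v : ZMod m)⁻¹
        = (u : ZMod m) * ((a : ZMod m) * (v : ZMod m)⁻¹) := by ring
    have hval : ((a : ZMod m) * (u : ZMod m) * (v : ZMod m)⁻¹).val % m = (u * bf v) % m := by
      rw [hmul, ZMod.val_mul, ZMod.val_natCast, Nat.mod_mod_of_dvd _ dvd_rfl]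
      exact Nat.ModEq.mul_right (bf v) (Nat.mod_modEq u m)
    have h1 : Complex.exp (2 * Real.pi * Complex.I *
          ((((a : ZMod m) * (u : ZMod m) * (v : ZMod m)⁻¹).val : ℝ) / m))
        = Complex.exp (2*Real.pi*Complex.I*
            (((((a : ZMod m) * (u : ZMod m) * (v : ZMod m)⁻¹).val : ℕ):ℝ)/m : ℝ)) := by
      norm_cast
    rw [h1, exp_congr_mod m (by omega) _ (u * bf v) hval, exp_pow]
  -- step: bound by sum of inner norms
  have hstep1 : ‖∑ v ∈ F, ∑ u ∈ Finset.Icc (L v + 1) (Uv v),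
          Complex.exp (2 * Real.pi * Complex.I *
            ((((a : ZMod m) * (u : ZMod m) * (v : ZMod m)⁻¹).val : ℝ) / m))‖
      ≤ ∑ v ∈ F, min (U:ℝ) ((m:ℝ) / (βf v)) := by
    refine (norm_sum_le _ _).trans (Finset.sum_le_sum ?_)
    intro v hv
    obtain ⟨hb1, hb2⟩ := hbv v hv
    rw [Finset.sum_congr rfl (fun u _ => hsummand v hv u)]
    apply le_min
    · calc ‖∑ u ∈ Finset.Icc (L v + 1) (Uv v),
            Complex.exp (2*Real.pi*Complex.I*((((bf v):ℝ)/m : ℝ):ℂ)) ^ u‖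
          ≤ ∑ u ∈ Finset.Icc (L v + 1) (Uv v),
            ‖Complex.exp (2*Real.pi*Complex.I*((((bf v):ℝ)/m : ℝ):ℂ)) ^ u‖ := norm_sum_le _ _
        _ = ∑ u ∈ Finset.Icc (L v + 1) (Uv v), (1:ℝ) := by
            refine Finset.sum_congr rfl (fun u _ => ?_)
            rw [norm_pow, norm_exp_real_one, one_pow]
        _ = ((Finset.Icc (L v + 1) (Uv v)).card : ℝ) := by rw [Finset.sum_const]; simp
        _ ≤ (U:ℝ) := by
            rw [Nat.card_Icc]
            have := hLU v
            have : Uv v + 1 - (L v + 1) ≤ U := by omega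
            exact_mod_cast this
    · exact geom_norm_bound m (bf v) hm hb1 hb2 (L v + 1) (Uv v)
  -- counting bound
  have hstep2 : ∑ v ∈ F, min (U:ℝ) ((m:ℝ) / (βf v))
      ≤ C * ((U : ℝ) + W) * ((W:ℝ) * m) ^ ε := by
    set J := Nat.log 2 m with hJ
    have hpowJ : 2^J ≤ m := Nat.pow_log_le_self 2 (by omega)
    have hWm1 : (1:ℝ) ≤ (W:ℝ) * m := by
      have h1 : (1:ℝ) ≤ (W:ℝ) := by exact_mod_cast le_trans hV hVW
      have h2 : (1:ℝ) ≤ (m:ℝ) := by exact_mod_cast (by omega : 1 ≤ m)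
      nlinarith
    have hWmδ : (0:ℝ) < ((W:ℝ)*m) ^ δ := by positivity
    have hmapsto : ∀ v ∈ F, Nat.log 2 (βf v) ∈ Finset.range (J+1) := by
      intro v hv
      rw [Finset.mem_range, Nat.lt_succ_iff]
      apply Nat.log_mono_right
      have := (hbv v hv).2
      simp only [hβf]
      omega
    rw [← Finset.sum_fiberwise_of_maps_to hmapsto (fun v => min (U:ℝ) ((m:ℝ)/(βf v)))]
    have hperj : ∀ j ∈ Finset.range (J+1),
        ∑ v ∈ (F.filter (fun v => Nat.log 2 (βf v) = j)), min (U:ℝ) ((m:ℝ)/(βf v))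
          ≤ 2*C₀*((W:ℝ)*m)^δ * (4*(W:ℝ) + 2*U) := by
      intro j hj
      rw [Finset.mem_range, Nat.lt_succ_iff] at hj
      set Fj := F.filter (fun v => Nat.log 2 (βf v) = j) with hFj
      have h2j : ((2:ℝ))^j ≤ m := by
        have h1 : (2:ℕ)^j ≤ 2^J := Nat.pow_le_pow_right (by norm_num) hj
        exact_mod_cast le_trans h1 hpowJ
      have h2j0 : (0:ℝ) < 2^j := by positivity
      have hpt : ∀ v ∈ Fj, min (U:ℝ) ((m:ℝ)/(βf v)) ≤ min (U:ℝ) ((m:ℝ)/2^j) := by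
        intro v hv
        rw [hFj, Finset.mem_filter] at hv
        have hβlow : (2:ℕ)^j ≤ βf v := by
          rw [← hv.2]
          apply Nat.pow_log_le_self
          have h1 := (hbv v hv.1).1
          have h2 := (hbv v hv.1).2
          simp only [hβf]
          omega
        apply min_le_min le_rfl
        apply div_le_div_of_nonneg_left (by positivity) h2j0
        exact_mod_cast hβlow
      set Bj := W * 2^(j+1) with hBj
      set Sj := (Finset.Icc 1 Bj).filter
        (fun N : ℕ => (N : ZMod m) = (a : ZMod m) ∨ (N : ZMod m) = -(a : ZMod m)) with hSj
      have hcover : Fj ⊆ Sj.biUnion (fun N => Fj.filter (fun v => v * βf v = N)) := by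
        intro v hv
        rw [Finset.mem_biUnion]
        refine ⟨v * βf v, ?_, by rw [Finset.mem_filter]; exact ⟨hv, rfl⟩⟩
        have hvF : v ∈ F := (Finset.mem_filter.mp hv).1
        obtain ⟨hb1, hb2⟩ := hbv v hvF
        have hvV : V ≤ v ∧ v ≤ W := by
          have := (Finset.mem_filter.mp hvF).1
          exact Finset.mem_Icc.mp this
        have hcop : Nat.Coprime v m := (Finset.mem_filter.mp hvF).2
        have hβub : βf v < 2^(j+1) := by
          have h5 := (Finset.mem_filter.mp hv).2
          rw [← h5]
          apply Nat.lt_pow_succ_log_self (by norm_num)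
        rw [hSj, Finset.mem_filter, Finset.mem_Icc]
        refine ⟨⟨?_, ?_⟩, ?_⟩
        · have hβ1 : 1 ≤ βf v := by simp only [hβf]; omega
          have hv1 : 1 ≤ v := by omega
          exact Nat.one_le_iff_ne_zero.mpr (by positivity)
        · rw [hBj]
          exact Nat.mul_le_mul hvV.2 hβub.le
        · have hbcast : ((bf v : ℕ) : ZMod m) = (a : ZMod m) * (v : ZMod m)⁻¹ :=
            ZMod.natCast_zmod_val _
          have hinv : (v : ZMod m) * (v : ZMod m)⁻¹ = 1 := ZMod.coe_mul_inv_eq_one v hcop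
          rcases min_cases (bf v) (m - bf v) with ⟨hmin, _⟩ | ⟨hmin, _⟩
          · left
            have h6 : ((v * βf v : ℕ) : ZMod m) = (v : ZMod m) * ((bf v : ℕ) : ZMod m) := by
              simp only [hβf, hmin]
              push_cast
              ring
            rw [h6, hbcast]
            calc (v : ZMod m) * ((a : ZMod m) * (v : ZMod m)⁻¹)
                = (a : ZMod m) * ((v : ZMod m) * (v : ZMod m)⁻¹) := by ring
              _ = (a : ZMod m) := by rw [hinv, mul_one]
          · right
            have hsub : ((m - bf v : ℕ) : ZMod m) = -((bf v : ℕ) : ZMod m) := by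
              rw [Nat.cast_sub hb2.le, ZMod.natCast_self, zero_sub]
            have h6 : ((v * βf v : ℕ) : ZMod m) = (v : ZMod m) * ((m - bf v : ℕ) : ZMod m) := by
              simp only [hβf, hmin]
              push_cast [Nat.cast_sub hb2.le]
              ring
            rw [h6, hsub, hbcast]
            calc (v : ZMod m) * -((a : ZMod m) * (v : ZMod m)⁻¹)
                = -((a : ZMod m) * ((v : ZMod m) * (v : ZMod m)⁻¹)) := by ring
              _ = -(a : ZMod m) := by rw [hinv, mul_one]
      have hfiber : ∀ N ∈ Sj, ((Fj.filter (fun v => v * βf v = N)).card : ℝ)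
          ≤ C₀ * ((Bj:ℝ))^δ := by
        intro N hN
        rw [hSj, Finset.mem_filter, Finset.mem_Icc] at hN
        have hN1 : 1 ≤ N := hN.1.1
        have hNB : N ≤ Bj := hN.1.2
        have hsubdiv : Fj.filter (fun v => v * βf v = N) ⊆ N.divisors := by
          intro v hv
          rw [Finset.mem_filter] at hv
          rw [Nat.mem_divisors]
          exact ⟨⟨βf v, hv.2.symm⟩, by omega⟩
        calc ((Fj.filter (fun v => v * βf v = N)).card : ℝ)
            ≤ (N.divisors.card : ℝ) := by exact_mod_cast Finset.card_le_card hsubdiv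
          _ ≤ C₀ * (N:ℝ)^δ := hC₀ N hN1
          _ ≤ C₀ * ((Bj:ℝ))^δ := by
              apply mul_le_mul_of_nonneg_left _ hC₀pos.le
              apply Real.rpow_le_rpow (by positivity) (by exact_mod_cast hNB) hδ.le
      have hSjcard : ((Sj.card : ℕ) : ℝ) ≤ 2*((Bj/m : ℕ) : ℝ) + 2 := by
        have hsub : Sj ⊆ ((Finset.Icc 1 Bj).filter (fun N : ℕ => (N : ZMod m) = (a : ZMod m)))
            ∪ ((Finset.Icc 1 Bj).filter (fun N : ℕ => (N : ZMod m) = -(a : ZMod m))) := by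
          intro N hN
          rw [hSj, Finset.mem_filter] at hN
          rw [Finset.mem_union, Finset.mem_filter, Finset.mem_filter]
          tauto
        have h1 := residue_count m Bj (by omega) ((a : ZMod m))
        have h2 := residue_count m Bj (by omega) (-(a : ZMod m))
        have h3 : Sj.card ≤ (Bj/m + 1) + (Bj/m + 1) := by
          calc Sj.card ≤ _ := Finset.card_le_card hsub
            _ ≤ _ + _ := Finset.card_union_le _ _
            _ ≤ (Bj/m + 1) + (Bj/m + 1) := add_le_add h1 h2
        have h4 : (Sj.card : ℝ) ≤ (((Bj/m + 1) + (Bj/m + 1) : ℕ) : ℝ) := by exact_mod_cast h3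
        push_cast at h4 ⊢
        linarith
      have hcard : ((Fj.card : ℕ) : ℝ) ≤ (2*((Bj/m : ℕ) : ℝ) + 2) * (C₀ * ((Bj:ℝ))^δ) := by
        have h1 : Fj.card ≤ ∑ N ∈ Sj, (Fj.filter (fun v => v * βf v = N)).card :=
          le_trans (Finset.card_le_card hcover) (Finset.card_biUnion_le)
        have h2 : ((Fj.card : ℕ) : ℝ)
            ≤ ∑ N ∈ Sj, ((Fj.filter (fun v => v * βf v = N)).card : ℝ) := by
          exact_mod_cast h1
        calc ((Fj.card : ℕ) : ℝ) ≤ _ := h2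
          _ ≤ ∑ _N ∈ Sj, C₀ * ((Bj:ℝ))^δ := Finset.sum_le_sum hfiber
          _ = (Sj.card : ℝ) * (C₀ * ((Bj:ℝ))^δ) := by
              rw [Finset.sum_const, nsmul_eq_mul]
          _ ≤ (2*((Bj/m : ℕ) : ℝ) + 2) * (C₀ * ((Bj:ℝ))^δ) :=
              mul_le_mul_of_nonneg_right hSjcard (by positivity)
      have hBjδ : ((Bj:ℝ))^δ ≤ 2 * ((W:ℝ)*m)^δ := by
        have hBle : (Bj:ℝ) ≤ 2*((W:ℝ)*m) := by
          rw [hBj]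
          push_cast
          have h5 : ((2:ℝ))^(j+1) = 2 * 2^j := by ring
          rw [h5]
          nlinarith [h2j, hW0]
        calc ((Bj:ℝ))^δ ≤ (2*((W:ℝ)*m))^δ := Real.rpow_le_rpow (by positivity) hBle hδ.le
          _ = (2:ℝ)^δ * ((W:ℝ)*m)^δ := Real.mul_rpow (by norm_num) (by positivity)
          _ ≤ 2 * ((W:ℝ)*m)^δ := by
              apply mul_le_mul_of_nonneg_right _ hWmδ.le
              calc (2:ℝ)^δ ≤ (2:ℝ)^(1:ℝ) :=
                    Real.rpow_le_rpow_of_exponent_le (by norm_num) (by linarith)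
                _ = 2 := Real.rpow_one 2
      have hdivcast : ((Bj/m : ℕ) : ℝ) ≤ (Bj:ℝ)/m := Nat.cast_div_le
      have hBjr : (Bj:ℝ) = (W:ℝ) * 2^(j+1) := by rw [hBj]; push_cast; ring
      have hM0 : (0:ℝ) ≤ min (U:ℝ) ((m:ℝ)/2^j) := le_min (by positivity) (by positivity)
      have hMle : min (U:ℝ) ((m:ℝ)/2^j) ≤ (m:ℝ)/2^j := min_le_right _ _
      have hMU : min (U:ℝ) ((m:ℝ)/2^j) ≤ (U:ℝ) := min_le_left _ _
      have hdM : ((Bj/m : ℕ) : ℝ) * min (U:ℝ) ((m:ℝ)/2^j) ≤ 2*(W:ℝ) := by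
        calc ((Bj/m : ℕ) : ℝ) * min (U:ℝ) ((m:ℝ)/2^j)
            ≤ ((Bj:ℝ)/m) * ((m:ℝ)/2^j) := by
              apply mul_le_mul hdivcast hMle hM0 (by positivity)
          _ = 2*(W:ℝ) := by
              rw [hBjr]
              field_simp
              ring
      calc ∑ v ∈ Fj, min (U:ℝ) ((m:ℝ)/(βf v))
          ≤ ∑ v ∈ Fj, min (U:ℝ) ((m:ℝ)/2^j) := Finset.sum_le_sum hpt
        _ = (Fj.card : ℝ) * min (U:ℝ) ((m:ℝ)/2^j) := by
            rw [Finset.sum_const, nsmul_eq_mul]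
        _ ≤ ((2*((Bj/m : ℕ) : ℝ) + 2) * (C₀ * ((Bj:ℝ))^δ)) * min (U:ℝ) ((m:ℝ)/2^j) :=
            mul_le_mul_of_nonneg_right hcard hM0
        _ = (C₀ * ((Bj:ℝ))^δ) * (2*(((Bj/m : ℕ) : ℝ) * min (U:ℝ) ((m:ℝ)/2^j))
              + 2 * min (U:ℝ) ((m:ℝ)/2^j)) := by ring
        _ ≤ (C₀ * ((Bj:ℝ))^δ) * (4*(W:ℝ) + 2*U) := by
            apply mul_le_mul_of_nonneg_left _ (by positivity)
            have := hdM
            linarith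
        _ ≤ (C₀ * (2 * ((W:ℝ)*m)^δ)) * (4*(W:ℝ) + 2*U) := by
            apply mul_le_mul_of_nonneg_right _ (by positivity)
            exact mul_le_mul_of_nonneg_left hBjδ hC₀pos.le
        _ = 2*C₀*((W:ℝ)*m)^δ * (4*(W:ℝ) + 2*U) := by ring
    have hJbound : ((J:ℝ)+1) ≤ (1/(δ*Real.log 2) + 1) * ((W:ℝ)*m)^δ := by
      have hJlog : (J:ℝ) * Real.log 2 ≤ Real.log m := by
        have h1 : ((2:ℝ))^J ≤ (m:ℝ) := by exact_mod_cast hpowJ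
        have h2 := Real.log_le_log (by positivity) h1
        rwa [Real.log_pow] at h2
      have hlogm : Real.log m ≤ (m:ℝ)^δ/δ := Real.log_le_rpow_div (by positivity) hδ
      have hmδ1 : (1:ℝ) ≤ (m:ℝ)^δ := by
        have h5 : (1:ℝ)^δ ≤ (m:ℝ)^δ :=
          Real.rpow_le_rpow zero_le_one (by exact_mod_cast (by omega : 1 ≤ m)) hδ.le
        rwa [Real.one_rpow] at h5
      have hJm : (J:ℝ) ≤ (m:ℝ)^δ/(δ*Real.log 2) := by
        rw [le_div_iff₀ (by positivity)]
        have h2 : δ * ((J:ℝ) * Real.log 2) ≤ δ * Real.log m :=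
          mul_le_mul_of_nonneg_left hJlog hδ.le
        have h3 : δ * Real.log m ≤ (m:ℝ)^δ := by
          have h4 := mul_le_mul_of_nonneg_left hlogm hδ.le
          rwa [mul_div_cancel₀ _ (ne_of_gt hδ)] at h4
        nlinarith
      have hmW : (m:ℝ)^δ ≤ ((W:ℝ)*m)^δ := by
        apply Real.rpow_le_rpow (by positivity) _ hδ.le
        have h1 : (1:ℝ) ≤ (W:ℝ) := by exact_mod_cast le_trans hV hVW
        nlinarith [hm0]
      have hexp : (m:ℝ)^δ/(δ*Real.log 2) = (1/(δ*Real.log 2)) * (m:ℝ)^δ := by ring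
      calc ((J:ℝ)+1) ≤ (m:ℝ)^δ/(δ*Real.log 2) + (m:ℝ)^δ := by linarith
        _ = (1/(δ*Real.log 2) + 1) * (m:ℝ)^δ := by ring
        _ ≤ (1/(δ*Real.log 2) + 1) * ((W:ℝ)*m)^δ := by
            apply mul_le_mul_of_nonneg_left hmW
            positivity
    have h2δε : ((W:ℝ)*m)^(δ+δ) ≤ ((W:ℝ)*m)^ε := by
      apply Real.rpow_le_rpow_of_exponent_le hWm1
      have : δ + δ = min ε 1 := by rw [hδdef]; ring
      rw [this]
      exact min_le_left _ _
    calc ∑ j ∈ Finset.range (J+1),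
          ∑ v ∈ (F.filter (fun v => Nat.log 2 (βf v) = j)), min (U:ℝ) ((m:ℝ)/(βf v))
        ≤ ∑ _j ∈ Finset.range (J+1), 2*C₀*((W:ℝ)*m)^δ * (4*(W:ℝ) + 2*U) :=
          Finset.sum_le_sum hperj
      _ = ((J:ℝ)+1) * (2*C₀*((W:ℝ)*m)^δ * (4*(W:ℝ) + 2*U)) := by
          rw [Finset.sum_const, Finset.card_range, nsmul_eq_mul]
          push_cast
          ring
      _ ≤ ((1/(δ*Real.log 2) + 1) * ((W:ℝ)*m)^δ) * (2*C₀*((W:ℝ)*m)^δ * (4*(W:ℝ) + 2*U)) := by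
          apply mul_le_mul_of_nonneg_right hJbound
          positivity
      _ = (2*C₀*(1/(δ*Real.log 2) + 1)) * (4*(W:ℝ) + 2*U) * (((W:ℝ)*m)^δ * ((W:ℝ)*m)^δ) := by
          ring
      _ ≤ (2*C₀*(1/(δ*Real.log 2) + 1)) * (4*((U:ℝ)+W)) * (((W:ℝ)*m)^δ * ((W:ℝ)*m)^δ) := by
          apply mul_le_mul_of_nonneg_right _ (by positivity)
          apply mul_le_mul_of_nonneg_left _ (by positivity)
          have hU0 : (0:ℝ) ≤ U := by positivity
          have hW0' : (0:ℝ) ≤ W := by positivity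
          linarith
      _ = C * ((U:ℝ)+W) * (((W:ℝ)*m)^δ * ((W:ℝ)*m)^δ) := by
          rw [hCdef]
          ring
      _ ≤ C * ((U:ℝ)+W) * ((W:ℝ)*m)^ε := by
          apply mul_le_mul_of_nonneg_left _ (by positivity)
          rw [← Real.rpow_add (by linarith : (0:ℝ) < (W:ℝ)*m)]
          exact h2δε
  calc _ ≤ ∑ v ∈ F, min (U:ℝ) ((m:ℝ) / (βf v)) := hstep1
    _ ≤ C * ((U : ℝ) + W) * ((W:ℝ) * m) ^ ε := hstep2
    _ = C * ((U : ℝ) + W) * ((W * m : ℕ) : ℝ) ^ ε := by push_cast; ring_nf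
end
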